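/- arXiv:2402.17552 — 6 statements merged into one kernel-verified Lean document; each statement's English description precedes it below -/
import Mathlib

section
/- Let T ∈ L(H) be trace class and let V, B₀ ∈ L(H) with ran B₀ ⊆ ran V, and suppose T(ker V) is a nonnegative subspace of H. Let P ∈ L(H) be the Hilbert-space orthogonal projection onto ker V and let D ∈ L(H) be the reduced Douglas solution of VX = B₀ (the unique D with VD = B₀ and ran D ⊆ (ker V)^⊥). The following are equivalent: (i) there exists X₀ ∈ L(H) with VX₀ = B₀ such that tr_J(X₀^# T^#T X₀) ≤ tr_J(X^# T^#T X) for every X ∈ L(H) with VX = B₀; (ii) ran D ⊆ ker V + [T^#T(ker V)]^{[⊥]}; (iii) there exists Y ∈ L(H) with (J∘P∘J) ∘ T^#T ∘ (P Y + D) = 0. In this case, for any solution Y of (iii), the operator X₀ := P Y + D attains the minimum in (i), whose value is tr_J(X₀^# T^#T X₀). -/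
open ContinuousLinearMap
open scoped ENNReal

noncomputable section

variable {H : Type*} [NormedAddCommGroup H] [InnerProductSpace ℂ H] [CompleteSpace H]

/-- The Krein adjoint `S^# = J ∘ S* ∘ J` of `S ∈ L(H)` on a Krein space with signature
operator `J`. -/
def kadj (J S : H →L[ℂ] H) : H →L[ℂ] H :=
  J ∘L (ContinuousLinearMap.adjoint S) ∘L J

/-- `S` is a Hilbert–Schmidt operator (w.r.t. the Hilbert basis `b`; this is in fact
independent of the basis). -/
def IsHilbertSchmidt {ι : Type*} (b : HilbertBasis ι ℂ H) (S : H →L[ℂ] H) : Prop :=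
  Summable fun i => ‖S (b i)‖ ^ 2

/-- `S` is trace class: it is the product of two Hilbert–Schmidt operators. -/
def IsTraceClass {ι : Type*} (b : HilbertBasis ι ℂ H) (S : H →L[ℂ] H) : Prop :=
  ∃ S₁ S₂ : H →L[ℂ] H, IsHilbertSchmidt b S₁ ∧ IsHilbertSchmidt b S₂ ∧ S = S₁ ∘L S₂

/-- The `J`-trace `tr_J(S) = tr(J∘S)` of a (trace-class) operator `S`, computed in the
Hilbert basis `b`. -/
def trJ {ι : Type*} (J : H →L[ℂ] H) (b : HilbertBasis ι ℂ H) (S : H →L[ℂ] H) : ℝ :=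
  ∑' i, (inner ℂ (J (S (b i))) (b i) : ℂ).re

/-- The operator `X^# T^#T X`. -/
def splineOp (J T X : H →L[ℂ] H) : H →L[ℂ] H :=
  kadj J X ∘L ((kadj J T ∘L T) ∘L X)

section Aux
variable {ι : Type*}

/-- The `i`-th diagonal term of `J ∘ X^# T^#T X` in the basis `b`. -/
def tJ (J T : H →L[ℂ] H) (b : HilbertBasis ι ℂ H) (X : H →L[ℂ] H) (i : ι) : ℝ :=
  (inner ℂ (J (T (X (b i)))) (T (X (b i))) : ℂ).re

lemma hasSum_inner_sq (b : HilbertBasis ι ℂ H) (x : H) :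
    HasSum (fun i => ‖(inner ℂ (b i) x : ℂ)‖ ^ 2) (‖x‖ ^ 2) := by
  have h := lp.hasSum_norm (p := 2) (by norm_num) (b.repr x)
  have h2 : ((2 : ℝ≥0∞)).toReal = (2 : ℝ) := by norm_num
  rw [h2] at h
  have hpow : ∀ a : ℝ, a ^ (2 : ℝ) = a ^ 2 := fun a => by
    rw [show (2:ℝ) = ((2:ℕ):ℝ) by norm_num, Real.rpow_natCast]
  simp only [hpow, b.repr.norm_map] at h
  convert h using 2 with i
  rw [b.repr_apply_apply]

lemma isHS_comp_left (b : HilbertBasis ι ℂ H) {S : H →L[ℂ] H} (X : H →L[ℂ] H)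
    (hS : IsHilbertSchmidt b S) : IsHilbertSchmidt b (X ∘L S) := by
  refine Summable.of_nonneg_of_le (fun i => by positivity) (fun i => ?_) (hS.mul_left (‖X‖ ^ 2))
  simp only [comp_apply]
  calc ‖X (S (b i))‖ ^ 2 ≤ (‖X‖ * ‖S (b i)‖) ^ 2 := by
        have := X.le_opNorm (S (b i))
        nlinarith [norm_nonneg (X (S (b i)))]
    _ = ‖X‖ ^ 2 * ‖S (b i)‖ ^ 2 := by ring

lemma isHS_adjoint (b : HilbertBasis ι ℂ H) {S : H →L[ℂ] H}
    (hS : IsHilbertSchmidt b S) : IsHilbertSchmidt b (ContinuousLinearMap.adjoint S) := by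
  have hprod : Summable (fun p : ι × ι => ‖(inner ℂ (b p.2) (S (b p.1)) : ℂ)‖ ^ 2) := by
    refine (summable_prod_of_nonneg (fun p => by positivity)).mpr ⟨fun i => ?_, ?_⟩
    · exact (hasSum_inner_sq b (S (b i))).summable
    · have h : ∀ i, (∑' j, ‖(inner ℂ (b j) (S (b i)) : ℂ)‖ ^ 2) = ‖S (b i)‖ ^ 2 := fun i =>
        (hasSum_inner_sq b (S (b i))).tsum_eq
      exact Summable.congr hS (fun i => (h i).symm)
  have hswap : Summable (fun p : ι × ι => ‖(inner ℂ (b p.1) (S (b p.2)) : ℂ)‖ ^ 2) := by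
    have := hprod.prod_symm
    exact this
  have h2 := (summable_prod_of_nonneg (fun p => by positivity)).mp hswap
  refine Summable.congr h2.2 (fun a => ?_)
  have hps := (hasSum_inner_sq b ((ContinuousLinearMap.adjoint S) (b a))).tsum_eq
  rw [← hps]
  refine tsum_congr fun j => ?_
  congr 1
  rw [norm_inner_symm, ContinuousLinearMap.adjoint_inner_right]

lemma isHS_comp_right (b : HilbertBasis ι ℂ H) {S : H →L[ℂ] H} (X : H →L[ℂ] H)
    (hS : IsHilbertSchmidt b S) : IsHilbertSchmidt b (S ∘L X) := by
  have h1 := isHS_adjoint b hS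
  have h2 : IsHilbertSchmidt b (ContinuousLinearMap.adjoint X ∘L ContinuousLinearMap.adjoint S) :=
    isHS_comp_left b _ h1
  have h3 := isHS_adjoint b h2
  simpa [ContinuousLinearMap.adjoint_comp, ContinuousLinearMap.adjoint_adjoint] using h3

/-- Douglas-type solvability: if every `E x` is in the range of `C`, then the operator
equation `C ∘ Y = E` has a bounded solution. -/
lemma douglas (C E : H →L[ℂ] H) (h : ∀ x : H, ∃ y : H, C y = E x) :
    ∃ Y : H →L[ℂ] H, C ∘L Y = E := by
  set K : Submodule ℂ H := LinearMap.ker (C : H →ₗ[ℂ] H) with hK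
  have hKc : IsClosed (K : Set H) := ContinuousLinearMap.isClosed_ker C
  haveI : CompleteSpace K := hKc.completeSpace_coe
  have huniq : ∀ y₁ y₂ : H, y₁ ∈ Kᗮ → y₂ ∈ Kᗮ → C y₁ = C y₂ → y₁ = y₂ := by
    intro y₁ y₂ h₁ h₂ hC
    have hmem : y₁ - y₂ ∈ K := by
      simp only [hK, LinearMap.mem_ker, ContinuousLinearMap.coe_coe]
      rw [map_sub, hC, sub_self]
    have hmem2 : y₁ - y₂ ∈ Kᗮ := Submodule.sub_mem _ h₁ h₂
    have h0 : (inner ℂ (y₁ - y₂) (y₁ - y₂) : ℂ) = 0 :=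
      (Submodule.mem_orthogonal _ _).mp hmem2 _ hmem
    have := inner_self_eq_zero.mp h0
    exact sub_eq_zero.mp this
  have hex : ∀ x : H, ∃ y : H, y ∈ Kᗮ ∧ C y = E x := by
    intro x
    obtain ⟨y, hy⟩ := h x
    refine ⟨y - K.starProjection y, K.sub_starProjection_mem_orthogonal y, ?_⟩
    have hk : K.starProjection y ∈ K := K.starProjection_apply_mem y
    have : C (K.starProjection y) = 0 := LinearMap.mem_ker.mp hk
    rw [map_sub, this, sub_zero, hy]
  choose f hf1 hf2 using hex
  have hadd : ∀ x₁ x₂, f (x₁ + x₂) = f x₁ + f x₂ := by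
    intro x₁ x₂
    refine huniq _ _ (hf1 _) (Submodule.add_mem _ (hf1 x₁) (hf1 x₂)) ?_
    rw [hf2, map_add, map_add, hf2, hf2]
  have hsmul : ∀ (c : ℂ) (x : H), f (c • x) = c • f x := by
    intro c x
    refine huniq _ _ (hf1 _) (Submodule.smul_mem _ c (hf1 x)) ?_
    rw [hf2, map_smul, map_smul, hf2]
  let g : H →ₗ[ℂ] H := { toFun := f, map_add' := hadd, map_smul' := hsmul }
  have hcont : Continuous g := by
    refine g.continuous_of_seq_closed_graph ?_
    intro u x y hu hgu
    have h1 : Filter.Tendsto (fun n => C (f (u n))) Filter.atTop (nhds (C y)) :=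
      (C.continuous.tendsto y).comp hgu
    have h2 : (fun n => C (f (u n))) = fun n => E (u n) := funext fun n => hf2 (u n)
    have h3 : Filter.Tendsto (fun n => E (u n)) Filter.atTop (nhds (E x)) :=
      (E.continuous.tendsto x).comp hu
    have hCy : C y = E x := tendsto_nhds_unique (h2 ▸ h1) h3
    have hyK : y ∈ Kᗮ := by
      have hcl : IsClosed ((Kᗮ : Submodule ℂ H) : Set H) := Submodule.isClosed_orthogonal K
      exact hcl.mem_of_tendsto hgu (Filter.Eventually.of_forall fun n => hf1 (u n))
    exact huniq y (f x) hyK (hf1 x) (hCy.trans (hf2 x).symm)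
  refine ⟨{ toLinearMap := g, cont := hcont }, ?_⟩
  ext x
  exact hf2 x

end Aux

set_option maxHeartbeats 1000000 in
/-- for trace-class `T`, `ran B₀ ⊆ ran V`, `T(ker V)` nonnegative, `P` the
orthogonal projection onto `ker V` and `D` the reduced Douglas solution of `VX = B₀`,
the operator spline problem (i), the range inclusion (ii) and the normal equation (iii)
are equivalent; moreover, for any solution `Y` of (iii), `X₀ := PY + D` attains the
minimum in (i). -/
theorem stmt10 {ι : Type*}
    [TopologicalSpace.SeparableSpace H]
    (J : H →L[ℂ] H) (hJsa : IsSelfAdjoint J) (hJ2 : J ∘L J = 1)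
    (b : HilbertBasis ι ℂ H)
    (T V B₀ : H →L[ℂ] H)
    (hTtc : IsTraceClass b T)
    (hran : ∀ x : H, ∃ y : H, V y = B₀ x)
    (hnn : ∀ z : H, V z = 0 → 0 ≤ (inner ℂ (J (T z)) (T z) : ℂ).re)
    (P : H →L[ℂ] H) (hPker : ∀ x : H, V (P x) = 0)
    (hPid : ∀ x : H, V x = 0 → P x = x) (hPsa : IsSelfAdjoint P)
    (D : H →L[ℂ] H) (hD : V ∘L D = B₀)
    (hDran : ∀ x y : H, V y = 0 → (inner ℂ (D x) y : ℂ) = 0) :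
    (List.TFAE
      [ -- (i) the operator spline problem has a solution
        ∃ X₀ : H →L[ℂ] H, V ∘L X₀ = B₀ ∧ ∀ X : H →L[ℂ] H, V ∘L X = B₀ →
          trJ J b (splineOp J T X₀) ≤ trJ J b (splineOp J T X),
        -- (ii) `ran D ⊆ ker V + [T^#T(ker V)]^{[⊥]}`
        ∀ x : H, ∃ z w : H, V z = 0 ∧
          (∀ m : H, V m = 0 → (inner ℂ (J w) ((kadj J T ∘L T) m) : ℂ) = 0) ∧
          D x = z + w,
        -- (iii) the normal equation `(J∘P∘J) T^#T (PY + D) = 0` has a solution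
        ∃ Y : H →L[ℂ] H,
          (J ∘L P ∘L J) ∘L ((kadj J T ∘L T) ∘L (P ∘L Y + D)) = 0 ])
    ∧
    ∀ Y : H →L[ℂ] H,
      (J ∘L P ∘L J) ∘L ((kadj J T ∘L T) ∘L (P ∘L Y + D)) = 0 →
      (V ∘L (P ∘L Y + D) = B₀ ∧
        ∀ X : H →L[ℂ] H, V ∘L X = B₀ →
          trJ J b (splineOp J T (P ∘L Y + D)) ≤ trJ J b (splineOp J T X)) := by
  classical
  -- basic facts about J and P
  have hJJ : ∀ u : H, J (J u) = u := by
    intro u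
    have := congrArg (fun S : H →L[ℂ] H => S u) hJ2
    simpa using this
  have hJadj : ContinuousLinearMap.adjoint J = J := hJsa.adjoint_eq
  have hPadj : ContinuousLinearMap.adjoint P = P := hPsa.adjoint_eq
  have hJsym : ∀ u v : H, (inner ℂ (J u) v : ℂ) = inner ℂ u (J v) := by
    intro u v
    conv_lhs => rw [← hJadj]
    exact ContinuousLinearMap.adjoint_inner_left J v u
  have hPP : ∀ x : H, P (P x) = P x := fun x => hPid _ (hPker x)
  -- the operator B := T* J T
  set Bop : H →L[ℂ] H := ContinuousLinearMap.adjoint T ∘L (J ∘L T) with hBop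
  have hBapp : ∀ u : H, Bop u = ContinuousLinearMap.adjoint T (J (T u)) := fun u => rfl
  have hBinner : ∀ u v : H, (inner ℂ (Bop u) v : ℂ) = inner ℂ (J (T u)) (T v) := by
    intro u v
    rw [hBapp, ContinuousLinearMap.adjoint_inner_left]
  have hBsym : ∀ u v : H, (inner ℂ (Bop u) v : ℂ) = inner ℂ u (Bop v) := by
    intro u v
    rw [hBinner, hJsym, hBapp, ContinuousLinearMap.adjoint_inner_right]
  have hw_iff : ∀ w m : H, (inner ℂ (J w) ((kadj J T ∘L T) m) : ℂ) = inner ℂ w (Bop m) := by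
    intro w m
    have h0 : (kadj J T ∘L T) m = J (Bop m) := rfl
    rw [h0, hJsym, hJJ]
  -- normal equation reformulation
  have hNorm : ∀ X₀ : H →L[ℂ] H,
      ((J ∘L P ∘L J) ∘L ((kadj J T ∘L T) ∘L X₀) = 0) ↔ ∀ x, P (Bop (X₀ x)) = 0 := by
    intro X₀
    have happ : ∀ x, ((J ∘L P ∘L J) ∘L ((kadj J T ∘L T) ∘L X₀)) x = J (P (Bop (X₀ x))) := by
      intro x
      show J (P (J ((kadj J T ∘L T) (X₀ x)))) = _
      have h0 : (kadj J T ∘L T) (X₀ x) = J (Bop (X₀ x)) := rfl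
      rw [h0, hJJ]
    constructor
    · intro h x
      have h0 : ((J ∘L P ∘L J) ∘L ((kadj J T ∘L T) ∘L X₀)) x = 0 := by rw [h]; rfl
      rw [happ x] at h0
      have h1 := congrArg J h0
      rw [hJJ, map_zero] at h1
      exact h1
    · intro h
      ext x
      rw [happ x, h x, map_zero]
      rfl
  -- orthogonality of T X₀ x to T(ker V) from the normal equation
  have horthog : ∀ X₀ : H →L[ℂ] H, (∀ x, P (Bop (X₀ x)) = 0) →
      ∀ (x z : H), V z = 0 → (inner ℂ (J (T (X₀ x))) (T z) : ℂ) = 0 := by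
    intro X₀ hN x z hz
    rw [← hBinner, ← hPid z hz, ← ContinuousLinearMap.adjoint_inner_left, hPadj, hN x,
      inner_zero_left]
  -- summability
  obtain ⟨S₁, S₂, hS₁, hS₂, hT12⟩ := hTtc
  have hTHS : IsHilbertSchmidt b T := by rw [hT12]; exact isHS_comp_left b S₁ hS₂
  have hsum : ∀ X : H →L[ℂ] H, Summable (fun i => tJ J T b X i) := by
    intro X
    have hTX' : Summable (fun i => ‖T (X (b i))‖ ^ 2) := isHS_comp_right b X hTHS
    refine Summable.of_norm_bounded (hTX'.mul_left ‖J‖) (fun i => ?_)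
    simp only [tJ]
    calc ‖(inner ℂ (J (T (X (b i)))) (T (X (b i))) : ℂ).re‖
        ≤ ‖(inner ℂ (J (T (X (b i)))) (T (X (b i))) : ℂ)‖ := by
          rw [Real.norm_eq_abs]; exact Complex.abs_re_le_norm _
      _ ≤ ‖J (T (X (b i)))‖ * ‖T (X (b i))‖ := norm_inner_le_norm _ _
      _ ≤ (‖J‖ * ‖T (X (b i))‖) * ‖T (X (b i))‖ := by
          have := J.le_opNorm (T (X (b i)))
          nlinarith [norm_nonneg (T (X (b i)))]
      _ = ‖J‖ * ‖T (X (b i))‖ ^ 2 := by ring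
  -- the trace formula
  have hterm : ∀ (X : H →L[ℂ] H) (i : ι),
      (inner ℂ (J (splineOp J T X (b i))) (b i) : ℂ)
        = inner ℂ (J (T (X (b i)))) (T (X (b i))) := by
    intro X i
    simp only [splineOp, kadj, comp_apply]
    rw [hJJ, hJJ, ContinuousLinearMap.adjoint_inner_left,
      ContinuousLinearMap.adjoint_inner_left]
  have htrJ : ∀ X : H →L[ℂ] H, trJ J b (splineOp J T X) = ∑' i, tJ J T b X i := by
    intro X
    simp only [trJ, tJ]
    exact tsum_congr fun i => congrArg Complex.re (hterm X i)
  -- quadratic expansion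
  have hre2 : ∀ u v : H, (inner ℂ (J (u + v)) (u + v) : ℂ).re
      = (inner ℂ (J u) u : ℂ).re + (inner ℂ (J v) v : ℂ).re + 2 * (inner ℂ (J u) v : ℂ).re := by
    intro u v
    rw [map_add, inner_add_left, inner_add_right, inner_add_right]
    have h : (inner ℂ (J v) u : ℂ) = starRingEnd ℂ (inner ℂ (J u) v) := by
      rw [hJsym]
      exact (inner_conj_symm v (J u)).symm
    rw [h]
    simp only [Complex.add_re, Complex.conj_re]
    ring
  -- minimality from orthogonality
  have hminTerm : ∀ X₀ : H →L[ℂ] H,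
      (∀ x z, V z = 0 → (inner ℂ (J (T (X₀ x))) (T z) : ℂ) = 0) →
      V ∘L X₀ = B₀ → ∀ X : H →L[ℂ] H, V ∘L X = B₀ →
      (∑' i, tJ J T b X₀ i) ≤ ∑' i, tJ J T b X i := by
    intro X₀ hX₀ hVX₀ X hVX
    refine (hsum X₀).tsum_le_tsum (fun i => ?_) (hsum X)
    have hker : V (X (b i) - X₀ (b i)) = 0 := by
      have h1 : V (X (b i)) = B₀ (b i) := DFunLike.congr_fun hVX (b i)
      have h2 : V (X₀ (b i)) = B₀ (b i) := DFunLike.congr_fun hVX₀ (b i)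
      rw [map_sub, h1, h2, sub_self]
    have hXsplit : X (b i) = X₀ (b i) + (X (b i) - X₀ (b i)) := by abel
    simp only [tJ]
    rw [hXsplit, map_add, hre2, hX₀ (b i) _ hker, Complex.zero_re, mul_zero, add_zero]
    have := hnn _ hker
    linarith
  -- the "moreover" part
  have hmain : ∀ Y : H →L[ℂ] H,
      (J ∘L P ∘L J) ∘L ((kadj J T ∘L T) ∘L (P ∘L Y + D)) = 0 →
      (V ∘L (P ∘L Y + D) = B₀ ∧ ∀ X : H →L[ℂ] H, V ∘L X = B₀ →
        trJ J b (splineOp J T (P ∘L Y + D)) ≤ trJ J b (splineOp J T X)) := by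
    intro Y hY
    have hVX₀ : V ∘L (P ∘L Y + D) = B₀ := by
      ext x
      have h1 : (V ∘L (P ∘L Y + D)) x = V (P (Y x)) + V (D x) := by
        simp [map_add]
      rw [h1, hPker (Y x), zero_add]
      exact DFunLike.congr_fun hD x
    have hN := (hNorm (P ∘L Y + D)).mp hY
    refine ⟨hVX₀, fun X hX => ?_⟩
    rw [htrJ, htrJ]
    exact hminTerm _ (horthog _ hN) hVX₀ X hX
  refine ⟨?_, hmain⟩
  tfae_have 1 → 2 := by
    rintro ⟨X₀, hVX₀, hminX₀⟩
    -- orthogonality at basis vectors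
    have hi : ∀ (z : H), V z = 0 → ∀ i₀ : ι, (inner ℂ (J (T (X₀ (b i₀)))) (T z) : ℂ) = 0 := by
      intro z hz i₀
      set a : ℂ := inner ℂ (J (T (X₀ (b i₀)))) (T z) with ha
      set q : ℝ := (inner ℂ (J (T z)) (T z) : ℂ).re with hqdef
      have hq0 : 0 ≤ q := hnn z hz
      set τ : ℝ := (q + 1)⁻¹ with hτ
      have hτpos : 0 < τ := by rw [hτ]; positivity
      set c : ℂ := -(τ : ℂ) * (starRingEnd ℂ) a with hc
      set K : H →L[ℂ] H := (innerSL ℂ (b i₀)).smulRight (c • z) with hKdef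
      have hKapp : ∀ v : H, K v = (inner ℂ (b i₀) v : ℂ) • (c • z) := fun v => rfl
      have hVK : V ∘L (X₀ + K) = B₀ := by
        ext v
        have h1 : (V ∘L (X₀ + K)) v = V (X₀ v) + V (K v) := by simp [map_add]
        rw [h1, hKapp, map_smul, map_smul, hz, smul_zero, smul_zero, add_zero]
        exact DFunLike.congr_fun hVX₀ v
      have hle := hminX₀ (X₀ + K) hVK
      rw [htrJ, htrJ] at hle
      have hKzero : ∀ i, i ≠ i₀ → (X₀ + K) (b i) = X₀ (b i) := by
        intro i hi
        have h0 : (inner ℂ (b i₀) (b i) : ℂ) = 0 := b.orthonormal.2 (Ne.symm hi)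
        have hK0 : K (b i) = 0 := by rw [hKapp, h0, zero_smul]
        simp [ContinuousLinearMap.add_apply, hK0]
      have hdiff : (∑' i, tJ J T b (X₀ + K) i) - (∑' i, tJ J T b X₀ i)
          = tJ J T b (X₀ + K) i₀ - tJ J T b X₀ i₀ := by
        rw [← Summable.tsum_sub (hsum (X₀ + K)) (hsum X₀)]
        exact tsum_eq_single i₀ (fun i hi => by
          simp only [tJ]; rw [hKzero i hi, sub_self])
      have hKb0 : (X₀ + K) (b i₀) = X₀ (b i₀) + c • z := by
        have h0 : (inner ℂ (b i₀) (b i₀) : ℂ) = 1 := by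
          rw [inner_self_eq_norm_sq_to_K, b.orthonormal.1 i₀]
          norm_num
        have hK1 : K (b i₀) = c • z := by rw [hKapp, h0, one_smul]
        simp [ContinuousLinearMap.add_apply, hK1]
      have hti : tJ J T b (X₀ + K) i₀
          = tJ J T b X₀ i₀ + Complex.normSq c * q + 2 * (c * a).re := by
        simp only [tJ]
        rw [hKb0, map_add, hre2]
        have e1 : (inner ℂ (J (T (c • z))) (T (c • z)) : ℂ).re = Complex.normSq c * q := by
          rw [map_smul, map_smul, inner_smul_left, inner_smul_right, ← mul_assoc,
            show (starRingEnd ℂ) c * c = (Complex.normSq c : ℂ) by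
              rw [mul_comm, Complex.mul_conj],
            Complex.re_ofReal_mul, hqdef]
        have e2 : (inner ℂ (J (T (X₀ (b i₀)))) (T (c • z)) : ℂ).re = (c * a).re := by
          rw [map_smul, inner_smul_right, ha]
        rw [e1, e2]
      have hineq : 0 ≤ Complex.normSq c * q + 2 * (c * a).re := by
        have h2 : tJ J T b (X₀ + K) i₀ - tJ J T b X₀ i₀
            = Complex.normSq c * q + 2 * (c * a).re := by rw [hti]; ring
        linarith [hle, hdiff, h2]
      have hca : (c * a).re = -(τ * Complex.normSq a) := by
        rw [hc, mul_assoc,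
          show (starRingEnd ℂ) a * a = (Complex.normSq a : ℂ) by
            rw [mul_comm, Complex.mul_conj]]
        simp [Complex.re_ofReal_mul]
      have hnc : Complex.normSq c = τ ^ 2 * Complex.normSq a := by
        rw [hc, Complex.normSq_mul, Complex.normSq_conj, Complex.normSq_neg,
          Complex.normSq_ofReal]
        ring
      rw [hca, hnc] at hineq
      have hnsq : 0 ≤ Complex.normSq a := Complex.normSq_nonneg a
      have hτq : τ * q = 1 - τ := by
        have hq1 : q + 1 ≠ 0 := by positivity
        rw [hτ]
        field_simp
        ring
      have e : τ ^ 2 * Complex.normSq a * q = τ * Complex.normSq a * (1 - τ) := by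
        calc τ ^ 2 * Complex.normSq a * q = τ * Complex.normSq a * (τ * q) := by ring
          _ = τ * Complex.normSq a * (1 - τ) := by rw [hτq]
      have hle0 : Complex.normSq a ≤ 0 := by
        nlinarith [hineq, e, hτpos, hnsq, mul_nonneg hτpos.le hnsq]
      have h0 : Complex.normSq a = 0 := le_antisymm hle0 hnsq
      exact Complex.normSq_eq_zero.mp h0
    -- extension to all vectors
    have hall : ∀ (z : H), V z = 0 → ∀ x : H, (inner ℂ (J (T (X₀ x))) (T z) : ℂ) = 0 := by
      intro z hz x
      have hs := b.hasSum_repr x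
      set φ : H →L[ℂ] ℂ := (innerSL ℂ (T z)).comp (J ∘L (T ∘L X₀)) with hφ
      have hφapp : ∀ y : H, φ y = inner ℂ (T z) (J (T (X₀ y))) := fun y => rfl
      have hφ0 : ∀ i, φ (b i) = 0 := by
        intro i
        rw [hφapp, ← inner_conj_symm, hi z hz i, map_zero]
      have hsum0 : HasSum (fun i => φ (b.repr x i • b i)) (φ x) := φ.hasSum hs
      simp only [map_smul, hφ0, smul_zero] at hsum0
      have hφx : φ x = 0 := hsum0.unique hasSum_zero
      rw [hφapp] at hφx
      rw [← inner_conj_symm, hφx, map_zero]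
    intro x
    refine ⟨D x - X₀ x, X₀ x, ?_, ?_, by abel⟩
    · have h1 : V (D x) = B₀ x := DFunLike.congr_fun hD x
      have h2 : V (X₀ x) = B₀ x := DFunLike.congr_fun hVX₀ x
      rw [map_sub, h1, h2, sub_self]
    · intro m hm
      rw [hw_iff, ← hBsym, hBinner]
      exact hall m hm x
  tfae_have 2 → 3 := by
    intro h2
    have hPBzero : ∀ w : H, (∀ m, V m = 0 → (inner ℂ w (Bop m) : ℂ) = 0) → P (Bop w) = 0 := by
      intro w hw
      have h1 : (inner ℂ (P (Bop w)) (P (Bop w)) : ℂ) = 0 := by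
        calc (inner ℂ (P (Bop w)) (P (Bop w)) : ℂ)
            = inner ℂ ((ContinuousLinearMap.adjoint P) (Bop w)) (P (Bop w)) := by rw [hPadj]
          _ = inner ℂ (Bop w) (P (P (Bop w))) := ContinuousLinearMap.adjoint_inner_left _ _ _
          _ = inner ℂ (Bop w) (P (Bop w)) := by rw [hPP]
          _ = inner ℂ w (Bop (P (Bop w))) := hBsym _ _
          _ = 0 := hw _ (hPker _)
      exact inner_self_eq_zero.mp h1
    have hex : ∀ x : H, ∃ y : H, (P ∘L (Bop ∘L P)) y = (-(P ∘L (Bop ∘L D))) x := by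
      intro x
      obtain ⟨z, w, hz, hw, hzw⟩ := h2 x
      have hw' : ∀ m, V m = 0 → (inner ℂ w (Bop m) : ℂ) = 0 := fun m hm => by
        rw [← hw_iff]; exact hw m hm
      have hPBw : P (Bop w) = 0 := hPBzero w hw'
      refine ⟨-z, ?_⟩
      have hl : (P ∘L (Bop ∘L P)) (-z) = -(P (Bop z)) := by
        show P (Bop (P (-z))) = _
        rw [map_neg, map_neg, map_neg, hPid z hz]
      have hr : (-(P ∘L (Bop ∘L D))) x = -(P (Bop (D x))) := rfl
      rw [hl, hr, hzw, map_add, map_add, hPBw, add_zero]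
    obtain ⟨Y, hY⟩ := douglas _ _ hex
    refine ⟨Y, (hNorm (P ∘L Y + D)).mpr ?_⟩
    intro x
    have h0 : P (Bop (P (Y x))) = -(P (Bop (D x))) := by
      have h1 := DFunLike.congr_fun hY x
      simpa using h1
    have h1 : (P ∘L Y + D) x = P (Y x) + D x := rfl
    rw [h1, map_add, map_add, h0, neg_add_cancel]
  tfae_have 3 → 1 := by
    rintro ⟨Y, hY⟩
    exact ⟨P ∘L Y + D, (hmain Y hY).1, (hmain Y hY).2⟩
  tfae_finish
end
end

section
/- Let T ∈ L(H) be trace class and let V ∈ L(H). The following are equivalent: (i) T(ker V) is a nonnegative subspace of H and for every B₀ ∈ L(H) with ran B₀ ⊆ ran V there exists X₀ ∈ L(H) with VX₀ = B₀ such that tr_J(X₀^# T^#T X₀) ≤ tr_J(X^# T^#T X) for every X ∈ L(H) with VX = B₀; (ii) there exists G ∈ L(H) with Gh ∈ sp(h) for every h ∈ H (a bounded global solution of the indefinite spline problem); (iii) T(ker V) is a nonnegative subspace of H and H = ker V + [T^#T(ker V)]^{[⊥]} (i.e., T^#T is ker V-complementable); (iv) sp(h₀) is nonempty for every h₀ ∈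 H. -/
open ContinuousLinearMap

noncomputable section

variable {H : Type*} [NormedAddCommGroup H] [InnerProductSpace ℂ H] [CompleteSpace H]

/-- `sp(h)`: the set of solutions of the indefinite spline problem with data `h`, i.e.
those `u ∈ h + ker V` with `[Tu,Tu] ≤ [T(h+z),T(h+z)]` for every `z ∈ ker V`. -/
def spSet (J T V : H →L[ℂ] H) (h : H) : Set H :=
  {u | (∃ z : H, V z = 0 ∧ u = h + z) ∧
    ∀ z : H, V z = 0 →
      (inner ℂ (J (T u)) (T u) : ℂ).re ≤ (inner ℂ (J (T (h + z))) (T (h + z)) : ℂ).re}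

/-! ### Auxiliary lemmas -/

set_option linter.unusedSectionVars false

section AuxiliaryLemmas

local notation "⟪" x ", " y "⟫" => @inner ℂ _ _ x y

lemma jinv {J : H →L[ℂ] H} (hJ2 : J ∘L J = 1) (x : H) : J (J x) = x := by
  have := ContinuousLinearMap.ext_iff.mp hJ2 x
  simpa using this

lemma jsym {J : H →L[ℂ] H} (hJsa : IsSelfAdjoint J) (x y : H) : ⟪J x, y⟫ = ⟪x, J y⟫ := by
  conv_lhs => rw [← hJsa.adjoint_eq]
  exact ContinuousLinearMap.adjoint_inner_left J y x

lemma key1 {J : H →L[ℂ] H} (hJsa : IsSelfAdjoint J) (hJ2 : J ∘L J = 1) (T : H →L[ℂ] H)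
    (u m : H) : ⟪J u, (kadj J T ∘L T) m⟫ = ⟪J (T u), T m⟫ := by
  simp only [kadj, ContinuousLinearMap.comp_apply]
  rw [jsym hJsa, jinv hJ2, ContinuousLinearMap.adjoint_inner_right, ← jsym hJsa]

lemma spline_diag {J : H →L[ℂ] H} (hJ2 : J ∘L J = 1) (T X : H →L[ℂ] H) (x : H) :
    ⟪J ((kadj J X ∘L ((kadj J T ∘L T) ∘L X)) x), x⟫ = ⟪J (T (X x)), T (X x)⟫ := by
  simp only [kadj, ContinuousLinearMap.comp_apply, jinv hJ2]
  rw [ContinuousLinearMap.adjoint_inner_left, ContinuousLinearMap.adjoint_inner_left]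

lemma expand1 {J : H →L[ℂ] H} (hJsa : IsSelfAdjoint J) (T : H →L[ℂ] H) (u m : H) :
    (⟪J (T (u + m)), T (u + m)⟫).re =
      (⟪J (T u), T u⟫).re + 2 * (⟪J (T u), T m⟫).re + (⟪J (T m), T m⟫).re := by
  have h1 : ⟪J (T m), T u⟫ = starRingEnd ℂ ⟪J (T u), T m⟫ := by
    rw [jsym hJsa, inner_conj_symm]
  simp only [map_add, inner_add_left, inner_add_right, h1, Complex.add_re, Complex.conj_re]
  ring

lemma quad_zero {a c : ℝ} (h : ∀ t : ℝ, 0 ≤ 2 * t * a + t ^ 2 * c) : a = 0 := by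
  have hc : 0 ≤ c := by have h1 := h 1; have h2 := h (-1); nlinarith
  have haux : ∀ a' : ℝ, (∀ t : ℝ, 0 ≤ 2 * t * a' + t ^ 2 * c) → a' ≤ 0 := by
    intro a' h'
    by_contra ha
    push_neg at ha
    set s := a' / (c + 1) with hs_def
    have hc1 : (0:ℝ) < c + 1 := by linarith
    have hs : s * (c + 1) = a' := div_mul_cancel₀ a' (ne_of_gt hc1)
    have hs0 : 0 < s := div_pos ha hc1
    have key : 2 * (-s) * a' + (-s) ^ 2 * c = -(s ^ 2 * (c + 2)) := by rw [← hs]; ring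
    have := h' (-s)
    rw [key] at this
    nlinarith
  have h1 := haux a h
  have h2 := haux (-a) (by intro t; have := h (-t); nlinarith)
  linarith

lemma quad_nonneg {κ c : ℝ} (h : ∀ t : ℝ, κ ≤ t ^ 2 * c) : 0 ≤ c := by
  by_contra hc
  push_neg at hc
  set t := Real.sqrt ((|κ| + 1) / (-c)) with ht_def
  have harg : 0 ≤ (|κ| + 1) / (-c) := by
    apply div_nonneg <;> [positivity; linarith]
  have ht2 : t ^ 2 = (|κ| + 1) / (-c) := Real.sq_sqrt harg
  have hcne : c ≠ 0 := by linarith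
  have hne : (-c) ≠ 0 := by linarith
  have : t ^ 2 * c = -(|κ| + 1) := by
    calc t ^ 2 * c = -((|κ| + 1) / (-c) * (-c)) := by rw [ht2]; ring
    _ = -(|κ| + 1) := by rw [div_mul_cancel₀ _ hne]
  have hκ := h t
  rw [this] at hκ
  have := neg_abs_le κ
  linarith

lemma smul_lin_re (t : ℝ) (x y : H) : (⟪x, (t : ℂ) • y⟫ : ℂ).re = t * (⟪x, y⟫ : ℂ).re := by
  rw [inner_smul_right]
  simp [Complex.mul_re]

lemma smul_quad_re (J T : H →L[ℂ] H) (t : ℝ) (w : H) :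
    (⟪J (T ((t : ℂ) • w)), T ((t : ℂ) • w)⟫ : ℂ).re = t ^ 2 * (⟪J (T w), T w⟫ : ℂ).re := by
  rw [map_smul, map_smul, inner_smul_left, inner_smul_right, Complex.conj_ofReal]
  simp [Complex.mul_re]
  ring

lemma complex_zero_of_re_zero {z : ℂ} (h1 : z.re = 0)
    (h2 : ((Complex.I : ℂ) * z).re = 0) : z = 0 := by
  apply Complex.ext h1
  rw [Complex.mul_re] at h2
  simpa using h2

/-! ### Summability lemmas -/

lemma parseval_sq {ι : Type*} (b : HilbertBasis ι ℂ H) (x : H) :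
    HasSum (fun j => ‖(⟪b j, x⟫ : ℂ)‖ ^ 2) (‖x‖ ^ 2) := by
  have h := (b.hasSum_inner_mul_inner x x).mapL Complex.reCLM
  have h2 : Complex.reCLM (⟪x, x⟫ : ℂ) = ‖x‖ ^ 2 := by
    simp only [Complex.reCLM_apply]
    rw [← RCLike.re_to_complex, inner_self_eq_norm_sq]
  rw [h2] at h
  refine h.congr_fun fun j => ?_
  simp only [Complex.reCLM_apply]
  rw [← inner_conj_symm x (b j), mul_comm, Complex.mul_conj, Complex.ofReal_re,
    Complex.sq_norm]

section Abstract
variable {ι : Type*} {v : ι → H}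
  (hv : ∀ x : H, HasSum (fun j => ‖(⟪v j, x⟫ : ℂ)‖ ^ 2) (‖x‖ ^ 2))

include hv in
lemma hs_flip' (C : H →L[ℂ] H) (hC : Summable fun i => ‖C (v i)‖ ^ 2) :
    Summable fun i => ‖(adjoint C) (v i)‖ ^ 2 := by
  have key : ∀ i j : ι, ‖(⟪v j, C (v i)⟫ : ℂ)‖ ^ 2 = ‖(⟪v i, (adjoint C) (v j)⟫ : ℂ)‖ ^ 2 := by
    intro i j
    rw [← ContinuousLinearMap.adjoint_inner_left, norm_inner_symm]
  set F : ι × ι → ℝ := fun p => ‖(⟪v p.2, C (v p.1)⟫ : ℂ)‖ ^ 2 with hF_def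
  have nn : 0 ≤ F := fun p => by positivity
  have hF : Summable F := by
    refine (summable_prod_of_nonneg nn).mpr ⟨fun i => (hv (C (v i))).summable, ?_⟩
    exact hC.congr fun i => ((hv (C (v i))).tsum_eq).symm
  have hG : Summable (F ∘ (Equiv.prodComm ι ι)) := (Equiv.prodComm ι ι).summable_iff.mpr hF
  have nn' : 0 ≤ (F ∘ (Equiv.prodComm ι ι)) := fun p => nn (Equiv.prodComm ι ι p)
  have h2 := ((summable_prod_of_nonneg nn').mp hG).2
  refine h2.congr fun i => ?_
  calc (∑' j, (F ∘ (Equiv.prodComm ι ι)) (i, j))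
      = ∑' j, ‖(⟪v j, (adjoint C) (v i)⟫ : ℂ)‖ ^ 2 := tsum_congr fun j => key j i
    _ = ‖(adjoint C) (v i)‖ ^ 2 := (hv _).tsum_eq

include hv in
lemma hs_comp_right' (S X : H →L[ℂ] H) (hS : Summable fun i => ‖S (v i)‖ ^ 2) :
    Summable fun i => ‖(S ∘L X) (v i)‖ ^ 2 := by
  have h1 := hs_flip' hv S hS
  have h2 : Summable fun i => ‖(adjoint (S ∘L X)) (v i)‖ ^ 2 := by
    refine Summable.of_nonneg_of_le (fun i => by positivity) (fun i => ?_)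
      ((h1.mul_left (‖adjoint X‖ ^ 2)))
    rw [ContinuousLinearMap.adjoint_comp]
    calc ‖(adjoint X ∘L adjoint S) (v i)‖ ^ 2
        ≤ (‖adjoint X‖ * ‖(adjoint S) (v i)‖) ^ 2 := by
          apply pow_le_pow_left₀ (norm_nonneg _)
          exact (adjoint X).le_opNorm _
      _ = ‖adjoint X‖ ^ 2 * ‖(adjoint S) (v i)‖ ^ 2 := by ring
  have h3 := hs_flip' hv (adjoint (S ∘L X)) h2
  refine h3.congr fun i => ?_
  rw [ContinuousLinearMap.adjoint_adjoint]

include hv in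
lemma trace_summable' (J S₁ S₂ X : H →L[ℂ] H)
    (h2 : Summable fun i => ‖S₂ (v i)‖ ^ 2) :
    Summable fun i => (⟪J ((S₁ ∘L S₂) (X (v i))), (S₁ ∘L S₂) (X (v i))⟫ : ℂ).re := by
  have hsum : Summable fun i => ‖J‖ * ‖S₁‖ ^ 2 * ‖(S₂ ∘L X) (v i)‖ ^ 2 :=
    (hs_comp_right' hv S₂ X h2).mul_left _
  refine Summable.of_abs (Summable.of_nonneg_of_le (fun i => abs_nonneg _) (fun i => ?_) hsum)
  set y := (S₁ ∘L S₂) (X (v i)) with hy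
  have hyb : ‖y‖ ≤ ‖S₁‖ * ‖(S₂ ∘L X) (v i)‖ := by
    rw [hy]; simp only [ContinuousLinearMap.comp_apply]
    exact S₁.le_opNorm _
  calc |(⟪J y, y⟫ : ℂ).re| ≤ ‖(⟪J y, y⟫ : ℂ)‖ := Complex.abs_re_le_norm _
    _ ≤ ‖J y‖ * ‖y‖ := norm_inner_le_norm _ _
    _ ≤ (‖J‖ * ‖y‖) * ‖y‖ := by
        apply mul_le_mul_of_nonneg_right (J.le_opNorm _) (norm_nonneg _)
    _ ≤ (‖J‖ * (‖S₁‖ * ‖(S₂ ∘L X) (v i)‖)) * (‖S₁‖ * ‖(S₂ ∘L X) (v i)‖) := by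
        gcongr
    _ = ‖J‖ * ‖S₁‖ ^ 2 * ‖(S₂ ∘L X) (v i)‖ ^ 2 := by ring

end Abstract

lemma trace_summable {ι : Type*} (b : HilbertBasis ι ℂ H) {T : H →L[ℂ] H}
    (hT : IsTraceClass b T) (J X : H →L[ℂ] H) :
    Summable fun i => (⟪J (T (X (b i))), T (X (b i))⟫ : ℂ).re := by
  obtain ⟨S₁, S₂, _, h2, rfl⟩ := hT
  exact trace_summable' (fun x => parseval_sq b x) J S₁ S₂ X h2

lemma trJ_spline_eq {ι : Type*} {J : H →L[ℂ] H} (hJ2 : J ∘L J = 1) (b : HilbertBasis ι ℂ H)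
    (T X : H →L[ℂ] H) :
    trJ J b (splineOp J T X) = ∑' i, (⟪J (T (X (b i))), T (X (b i))⟫ : ℂ).re := by
  unfold trJ splineOp
  exact tsum_congr fun i => congrArg Complex.re (spline_diag hJ2 T X (b i))

/-! ### Douglas lemma and bounded decomposition -/

/-- Douglas-type lemma: pointwise solvability gives a bounded solution. -/
lemma douglas_s12 (V B₀ : H →L[ℂ] H) (hs : ∀ x : H, ∃ y : H, V y = B₀ x) :
    ∃ X : H →L[ℂ] H, V ∘L X = B₀ := by
  classical
  set M : Submodule ℂ H := LinearMap.ker (V : H →ₗ[ℂ] H) with hM_def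
  have hMc : IsClosed (M : Set H) := ContinuousLinearMap.isClosed_ker V
  haveI : CompleteSpace M := hMc.completeSpace_coe
  set N : Submodule ℂ H := Mᗮ with hN_def
  have hex : ∀ x : H, ∃ y : H, y ∈ N ∧ V y = B₀ x := by
    intro x
    obtain ⟨y, hy⟩ := hs x
    refine ⟨y - (M.orthogonalProjectionOnto y : H), Submodule.sub_starProjection_mem_orthogonal (K := M) y, ?_⟩
    have hker : V ((M.orthogonalProjectionOnto y : H)) = 0 := (M.orthogonalProjectionOnto y).2
    rw [map_sub, hker, sub_zero, hy]
  have huniq : ∀ y y' : H, y ∈ N → y' ∈ N → V y = V y' → y = y' := by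
    intro y y' hy hy' hV
    have hker : y - y' ∈ M := by
      simp only [hM_def, LinearMap.mem_ker, ContinuousLinearMap.coe_coe, map_sub, hV, sub_self]
    have horth : y - y' ∈ N := sub_mem hy hy'
    have h0 := (Submodule.mem_orthogonal M (y - y')).mp horth (y - y') hker
    exact sub_eq_zero.mp (inner_self_eq_zero.mp h0)
  choose f hfN hfV using hex
  have hadd : ∀ x x' : H, f (x + x') = f x + f x' := by
    intro x x'
    refine huniq _ _ (hfN _) (add_mem (hfN x) (hfN x')) ?_
    simp only [map_add, hfV]
  have hsmul : ∀ (c : ℂ) (x : H), f (c • x) = c • f x := by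
    intro c x
    refine huniq _ _ (hfN _) (Submodule.smul_mem N c (hfN x)) ?_
    simp only [map_smul, hfV]
  set g : H →ₗ[ℂ] H :=
    { toFun := f, map_add' := hadd, map_smul' := hsmul } with hg_def
  have hgraph : (g.graph : Set (H × H)) =
      (Prod.snd ⁻¹' (N : Set H)) ∩ {p : H × H | V p.2 - B₀ p.1 = 0} := by
    ext p
    constructor
    · intro hp
      have hp' : p ∈ g.graph := hp
      rw [LinearMap.mem_graph_iff] at hp'
      obtain ⟨a, y⟩ := p
      simp only at hp'
      have hfp : y = f a := hp'
      subst hfp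
      exact ⟨hfN a, by simp [hfV a]⟩
    · rintro ⟨h1, h2⟩
      show p ∈ g.graph
      rw [LinearMap.mem_graph_iff]
      show p.2 = f p.1
      exact (huniq _ _ (hfN p.1) h1 (by rw [hfV]; exact (sub_eq_zero.mp h2).symm)).symm
  have hclosed : IsClosed (g.graph : Set (H × H)) := by
    rw [hgraph]
    refine IsClosed.inter (IsClosed.preimage continuous_snd ?_) ?_
    · exact Submodule.isClosed_orthogonal M
    · have : {p : H × H | V p.2 - B₀ p.1 = 0} =
          (fun p : H × H => V p.2 - B₀ p.1) ⁻¹' {0} := rfl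
      rw [this]
      exact IsClosed.preimage
        ((V.continuous.comp continuous_snd).sub (B₀.continuous.comp continuous_fst))
        isClosed_singleton
  refine ⟨ContinuousLinearMap.ofIsClosedGraph hclosed, ?_⟩
  ext x
  have : (ContinuousLinearMap.ofIsClosedGraph hclosed) x = g x := by
    rw [ContinuousLinearMap.coeFn_ofIsClosedGraph]
  simp only [ContinuousLinearMap.comp_apply, this]
  exact hfV x

/-- From an (algebraic) decomposition `H = M + W` with `M, W` closed subspaces, produce a
bounded operator `G` with `G h ∈ W` and `h - G h ∈ M`. -/
lemma exists_bounded_decomp (M W : Submodule ℂ H) (hMc : IsClosed (M : Set H))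
    (hWc : IsClosed (W : Set H)) (hsum : ∀ x : H, ∃ z ∈ M, ∃ w ∈ W, x = z + w) :
    ∃ G : H →L[ℂ] H, ∀ h : H, G h ∈ W ∧ h - G h ∈ M := by
  classical
  haveI : CompleteSpace M := hMc.completeSpace_coe
  haveI : CompleteSpace W := hWc.completeSpace_coe
  set P : H →L[ℂ] Mᗮ := Mᗮ.orthogonalProjectionOnto with hP_def
  set Ψ : W →L[ℂ] Mᗮ := P ∘L W.subtypeL with hΨ_def
  set K : Submodule ℂ W := LinearMap.ker (Ψ : W →ₗ[ℂ] Mᗮ) with hK_def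
  haveI : CompleteSpace K := (ContinuousLinearMap.isClosed_ker Ψ).completeSpace_coe
  set K' : Submodule ℂ W := Kᗮ with hK'_def
  haveI : CompleteSpace K' := (Submodule.isClosed_orthogonal K).completeSpace_coe
  set Ψ' : K' →L[ℂ] Mᗮ := Ψ ∘L K'.subtypeL with hΨ'_def
  have hinj : LinearMap.ker (Ψ' : K' →ₗ[ℂ] Mᗮ) = ⊥ := by
    rw [Submodule.eq_bot_iff]
    rintro ⟨x, hx⟩ hx0
    have hxK : x ∈ K := by
      rw [hK_def, LinearMap.mem_ker]
      exact hx0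
    have : (⟪x, x⟫ : ℂ) = 0 := (Submodule.mem_orthogonal K x).mp hx x hxK
    have hx00 : x = 0 := inner_self_eq_zero.mp this
    exact Subtype.ext (by simpa using hx00)
  have hsurj : LinearMap.range (Ψ' : K' →ₗ[ℂ] Mᗮ) = ⊤ := by
    rw [Submodule.eq_top_iff']
    rintro y
    obtain ⟨z, hz, w, hw, hx⟩ := hsum (y : H)
    set wW : W := ⟨w, hw⟩ with hwW_def
    set k : W := (K.orthogonalProjectionOnto wW : W) with hk_def
    have hkK : (k : W) ∈ K := (K.orthogonalProjectionOnto wW).2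
    set k' : W := wW - k with hk'_def
    have hk'K' : k' ∈ K' := Submodule.sub_starProjection_mem_orthogonal (K := K) wW
    refine ⟨⟨k', hk'K'⟩, ?_⟩
    have hΨk : Ψ k = 0 := (LinearMap.mem_ker).mp hkK
    have hΨw : Ψ wW = y := by
      have hPz : P z = 0 := by
        rw [hP_def]
        exact Submodule.orthogonalProjectionOnto_apply_of_mem_orthogonal
          (Submodule.le_orthogonal_orthogonal M hz)
      have hPy : P (y : H) = y := Submodule.orthogonalProjectionOnto_mem_subspace_eq_self y
      have : Ψ wW = P w := rfl
      rw [this]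
      have hw_eq : w = (y : H) - z := by rw [hx]; abel
      rw [hw_eq, map_sub, hPy, hPz, sub_zero]
    have : (Ψ' : K' →ₗ[ℂ] Mᗮ) ⟨k', hk'K'⟩ = Ψ k' := rfl
    rw [this, hk'_def, map_sub, hΨk, sub_zero, hΨw]
  set e : K' ≃L[ℂ] Mᗮ := ContinuousLinearEquiv.ofBijective Ψ' hinj hsurj with he_def
  set G : H →L[ℂ] H := W.subtypeL ∘L K'.subtypeL ∘L (e.symm : Mᗮ →L[ℂ] K') ∘L P with hG_def
  refine ⟨G, fun h => ⟨?_, ?_⟩⟩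
  · show ((((e.symm (P h)) : W) : H)) ∈ W
    exact ((e.symm (P h)) : W).2
  · have hPG : P (G h) = P h := by
      have h1 : P (G h) = Ψ' (e.symm (P h)) := rfl
      have h2 : Ψ' (e.symm (P h)) = e (e.symm (P h)) := rfl
      rw [h1, h2, e.apply_symm_apply]
    have h0 : P (h - G h) = 0 := by rw [map_sub, hPG, sub_self]
    have hmem : h - G h ∈ Mᗮᗮ := by
      rw [← Submodule.orthogonalProjectionOnto_eq_zero_iff]
      exact h0
    rwa [Submodule.orthogonal_orthogonal M] at hmem

/-! ### `spSet` lemmas -/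

section SpAux
variable {J T V : H →L[ℂ] H}

lemma min_of_orth (hJsa : IsSelfAdjoint J)
    (hnn : ∀ z : H, V z = 0 → 0 ≤ (⟪J (T z), T z⟫ : ℂ).re)
    {h u : H} (hu : ∃ z : H, V z = 0 ∧ u = h + z)
    (horth : ∀ m : H, V m = 0 → (⟪J (T u), T m⟫ : ℂ) = 0) :
    u ∈ spSet J T V h := by
  refine ⟨hu, fun z hz => ?_⟩
  obtain ⟨z₀, hz₀, hu_eq⟩ := hu
  have hm : V (z - z₀) = 0 := by rw [map_sub, hz, hz₀, sub_zero]
  have hhz : h + z = u + (z - z₀) := by rw [hu_eq]; abel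
  rw [hhz, expand1 hJsa T u (z - z₀), horth _ hm]
  simp only [Complex.zero_re]
  have := hnn _ hm
  linarith

lemma orth_of_mem (hJsa : IsSelfAdjoint J) {h u : H} (hmem : u ∈ spSet J T V h) :
    ∀ m : H, V m = 0 → (⟪J (T u), T m⟫ : ℂ) = 0 := by
  obtain ⟨⟨z₀, hz₀, hu_eq⟩, hmin⟩ := hmem
  have key : ∀ w : H, V w = 0 → ∀ t : ℝ,
      0 ≤ 2 * t * (⟪J (T u), T w⟫ : ℂ).re + t ^ 2 * (⟪J (T w), T w⟫ : ℂ).re := by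
    intro w hw t
    have hz : V (z₀ + (t : ℂ) • w) = 0 := by
      rw [map_add, hz₀, map_smul, hw, smul_zero, add_zero]
    have h1 := hmin _ hz
    have h2 : h + (z₀ + (t : ℂ) • w) = u + (t : ℂ) • w := by rw [hu_eq]; abel
    rw [h2, expand1 hJsa T u ((t : ℂ) • w), smul_quad_re, map_smul, smul_lin_re] at h1
    linarith
  intro m hm
  have ha := quad_zero (key m hm)
  have hb := quad_zero (key ((Complex.I : ℂ) • m) (by rw [map_smul, hm, smul_zero]))
  have hconv : (⟪J (T u), T ((Complex.I : ℂ) • m)⟫ : ℂ) = Complex.I * ⟪J (T u), T m⟫ := by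
    rw [map_smul, inner_smul_right]
  exact complex_zero_of_re_zero ha (by rw [← hconv]; exact hb)

lemma nonneg_of_sp0 (hsp : (spSet J T V 0).Nonempty) :
    ∀ z : H, V z = 0 → 0 ≤ (⟪J (T z), T z⟫ : ℂ).re := by
  obtain ⟨u, _, hmin⟩ := hsp
  intro z hz
  apply quad_nonneg (κ := (⟪J (T u), T u⟫ : ℂ).re)
  intro t
  have h1 := hmin ((t : ℂ) • z) (by rw [map_smul, hz, smul_zero])
  rwa [zero_add, smul_quad_re] at h1

end SpAux

end AuxiliaryLemmas

local notation "⟪" x ", " y "⟫" => @inner ℂ _ _ x y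

/-- for trace-class `T`, the equivalence of (i) solvability of the operator
spline problem for every admissible `B₀` together with nonnegativity of `T(ker V)`,
(ii) existence of a bounded global solution of the indefinite spline problem,
(iii) nonnegativity of `T(ker V)` together with `ker V`-complementability of `T^#T`, and
(iv) nonemptiness of `sp(h₀)` for every `h₀`. -/
theorem stmt12 {ι : Type*}
    [TopologicalSpace.SeparableSpace H]
    (J : H →L[ℂ] H) (hJsa : IsSelfAdjoint J) (hJ2 : J ∘L J = 1)
    (b : HilbertBasis ι ℂ H)
    (T V : H →L[ℂ] H)
    (hTtc : IsTraceClass b T) :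
    List.TFAE
      [ -- (i)
        (∀ z : H, V z = 0 → 0 ≤ (inner ℂ (J (T z)) (T z) : ℂ).re) ∧
          ∀ B₀ : H →L[ℂ] H, (∀ x : H, ∃ y : H, V y = B₀ x) →
            ∃ X₀ : H →L[ℂ] H, V ∘L X₀ = B₀ ∧
              ∀ X : H →L[ℂ] H, V ∘L X = B₀ →
                trJ J b (splineOp J T X₀) ≤ trJ J b (splineOp J T X),
        -- (ii) a bounded global solution of the spline problem exists
        ∃ G : H →L[ℂ] H, ∀ h : H, G h ∈ spSet J T V h,
        -- (iii) `T(ker V)` is nonnegative and `H = ker V + [T^#T(ker V)]^{[⊥]}`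
        (∀ z : H, V z = 0 → 0 ≤ (inner ℂ (J (T z)) (T z) : ℂ).re) ∧
          ∀ x : H, ∃ z w : H, V z = 0 ∧
            (∀ m : H, V m = 0 → (inner ℂ (J w) ((kadj J T ∘L T) m) : ℂ) = 0) ∧
            x = z + w,
        -- (iv)
        ∀ h₀ : H, (spSet J T V h₀).Nonempty ] := by
  classical
  tfae_have 2 → 4 := by
    rintro ⟨G, hG⟩ h₀
    exact ⟨G h₀, hG h₀⟩
  tfae_have 4 → 3 := by
    intro h4
    refine ⟨nonneg_of_sp0 (h4 0), fun x => ?_⟩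
    obtain ⟨u, hu⟩ := h4 x
    obtain ⟨z₀, hz₀, hux⟩ := hu.1
    refine ⟨-z₀, u, by rw [map_neg, hz₀, neg_zero], fun m hm => ?_, by rw [hux]; abel⟩
    rw [key1 hJsa hJ2 T u m]
    exact orth_of_mem hJsa hu m hm
  tfae_have 3 → 2 := by
    rintro ⟨hnn, hdec⟩
    set W : Submodule ℂ H :=
      { carrier := {w : H | ∀ m : H, V m = 0 → (⟪J (T w), T m⟫ : ℂ) = 0}
        add_mem' := by
          intro a a' ha ha' m hm
          simp only [Set.mem_setOf_eq] at ha ha' ⊢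
          rw [map_add, map_add, inner_add_left, ha m hm, ha' m hm, add_zero]
        zero_mem' := by
          intro m hm
          simp
        smul_mem' := by
          intro c w hw m hm
          simp only [Set.mem_setOf_eq] at hw ⊢
          rw [map_smul, map_smul, inner_smul_left, hw m hm, mul_zero] } with hW_def
    have hWc : IsClosed (W : Set H) := by
      have hset : (W : Set H) =
          ⋂ (m : {m : H // V m = 0}), {w : H | (⟪J (T w), T (m : H)⟫ : ℂ) = 0} := by
        ext w
        simp only [Set.mem_iInter, Set.mem_setOf_eq, Subtype.forall]
        constructor
        · intro hw m hm
          exact hw m hm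
        · intro hw m hm
          exact hw m hm
      rw [hset]
      exact isClosed_iInter fun m =>
        isClosed_eq (Continuous.inner (J.continuous.comp T.continuous) continuous_const)
          continuous_const
    have hMc : IsClosed ((LinearMap.ker (V : H →ₗ[ℂ] H) : Submodule ℂ H) : Set H) :=
      ContinuousLinearMap.isClosed_ker V
    have hsum : ∀ x : H, ∃ z ∈ (LinearMap.ker (V : H →ₗ[ℂ] H) : Submodule ℂ H), ∃ w ∈ W, x = z + w := by
      intro x
      obtain ⟨z, w, hz, hw, hx⟩ := hdec x
      refine ⟨z, LinearMap.mem_ker.mpr hz, w, fun m hm => ?_, hx⟩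
      rw [← key1 hJsa hJ2 T w m]
      exact hw m hm
    obtain ⟨G, hG⟩ := exists_bounded_decomp _ W hMc hWc hsum
    refine ⟨G, fun h => ?_⟩
    obtain ⟨hGW, hGM⟩ := hG h
    have hV : V (G h - h) = 0 := by
      have h0 : V (h - G h) = 0 := LinearMap.mem_ker.mp hGM
      have heq : G h - h = -(h - G h) := by abel
      rw [heq, map_neg, h0, neg_zero]
    exact min_of_orth hJsa hnn ⟨G h - h, hV, by abel⟩ (fun m hm => hGW m hm)
  tfae_have 2 → 1 := by
    rintro ⟨G, hG⟩
    refine ⟨nonneg_of_sp0 ⟨G 0, hG 0⟩, fun B₀ hB₀ => ?_⟩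
    obtain ⟨X', hX'⟩ := douglas_s12 V B₀ hB₀
    have hX'app : ∀ x : H, V (X' x) = B₀ x := fun x => ContinuousLinearMap.ext_iff.mp hX' x
    have hGV : ∀ x : H, V (G x) = V x := by
      intro x
      obtain ⟨z, hz, hGz⟩ := (hG x).1
      rw [hGz, map_add, hz, add_zero]
    refine ⟨G ∘L X', ?_, ?_⟩
    · ext x
      simp only [ContinuousLinearMap.comp_apply]
      rw [hGV, hX'app]
    · intro X hX
      have hXapp : ∀ x : H, V (X x) = B₀ x := fun x => ContinuousLinearMap.ext_iff.mp hX x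
      rw [trJ_spline_eq hJ2 b, trJ_spline_eq hJ2 b]
      refine Summable.tsum_le_tsum (fun i => ?_) (trace_summable b hTtc J (G ∘L X'))
        (trace_summable b hTtc J X)
      have hz : V (X (b i) - X' (b i)) = 0 := by
        rw [map_sub, hXapp, hX'app, sub_self]
      have h2 := (hG (X' (b i))).2 _ hz
      have h3 : X' (b i) + (X (b i) - X' (b i)) = X (b i) := by abel
      rw [h3] at h2
      exact h2
  tfae_have 1 → 2 := by
    rintro ⟨hnn, hop⟩
    obtain ⟨X₀, hVX₀, hmin⟩ := hop V (fun x => ⟨x, rfl⟩)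
    have hVX₀' : ∀ x : H, V (X₀ x) = V x := fun x => ContinuousLinearMap.ext_iff.mp hVX₀ x
    have hbasis : ∀ (i₀ : ι) (z : H), V z = 0 → (⟪J (T (X₀ (b i₀))), T z⟫ : ℂ) = 0 := by
      intro i₀ z hz
      have key : ∀ w : H, V w = 0 → ∀ t : ℝ,
          0 ≤ 2 * t * (⟪J (T (X₀ (b i₀))), T w⟫ : ℂ).re
            + t ^ 2 * (⟪J (T w), T w⟫ : ℂ).re := by
        intro w hw t
        set R : H →L[ℂ] H := (innerSL ℂ (b i₀ : H)).smulRight ((t : ℂ) • w) with hR_def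
        have hR_apply : ∀ x : H, R x = (⟪(b i₀ : H), x⟫ : ℂ) • ((t : ℂ) • w) := fun x => rfl
        have hVR : V ∘L R = 0 := by
          ext x
          simp only [ContinuousLinearMap.comp_apply, hR_apply, map_smul, hw, smul_zero,
            ContinuousLinearMap.zero_apply]
        have hVX : V ∘L (X₀ + R) = V := by
          rw [ContinuousLinearMap.comp_add, hVX₀, hVR, add_zero]
        have h1 := hmin (X₀ + R) hVX
        rw [trJ_spline_eq hJ2 b, trJ_spline_eq hJ2 b] at h1
        have hsum0 := trace_summable b hTtc J X₀
        have hsum1 := trace_summable b hTtc J (X₀ + R)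
        have hdiff : 0 ≤ ∑' i, ((⟪J (T ((X₀ + R) (b i))), T ((X₀ + R) (b i))⟫ : ℂ).re
            - (⟪J (T (X₀ (b i))), T (X₀ (b i))⟫ : ℂ).re) := by
          rw [Summable.tsum_sub hsum1 hsum0]
          linarith
        have hRb : ∀ i : ι, R (b i) = if i = i₀ then (t : ℂ) • w else 0 := by
          intro i
          rw [hR_apply]
          have hbo := orthonormal_iff_ite.mp b.orthonormal i₀ i
          rw [hbo]
          by_cases hii : i = i₀
          · subst hii
            simp
          · rw [if_neg (Ne.symm hii), if_neg hii, zero_smul]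
        have hterm : ∀ i : ι, i ≠ i₀ →
            ((⟪J (T ((X₀ + R) (b i))), T ((X₀ + R) (b i))⟫ : ℂ).re
              - (⟪J (T (X₀ (b i))), T (X₀ (b i))⟫ : ℂ).re) = 0 := by
          intro i hi
          rw [ContinuousLinearMap.add_apply, hRb i, if_neg hi, add_zero, sub_self]
        rw [tsum_eq_single i₀ hterm] at hdiff
        have hkey : (⟪J (T ((X₀ + R) (b i₀))), T ((X₀ + R) (b i₀))⟫ : ℂ).re
            - (⟪J (T (X₀ (b i₀))), T (X₀ (b i₀))⟫ : ℂ).re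
            = 2 * t * (⟪J (T (X₀ (b i₀))), T w⟫ : ℂ).re
              + t ^ 2 * (⟪J (T w), T w⟫ : ℂ).re := by
          rw [ContinuousLinearMap.add_apply, hRb i₀, if_pos rfl,
            expand1 hJsa T (X₀ (b i₀)) ((t : ℂ) • w), smul_quad_re, map_smul, smul_lin_re]
          ring
        rw [hkey] at hdiff
        exact hdiff
      have ha := quad_zero (key z hz)
      have hb := quad_zero (key ((Complex.I : ℂ) • z) (by rw [map_smul, hz, smul_zero]))
      have hconv : (⟪J (T (X₀ (b i₀))), T ((Complex.I : ℂ) • z)⟫ : ℂ)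
          = Complex.I * ⟪J (T (X₀ (b i₀))), T z⟫ := by
        rw [map_smul, inner_smul_right]
      exact complex_zero_of_re_zero ha (by rw [← hconv]; exact hb)
    have horth : ∀ h z : H, V z = 0 → (⟪J (T (X₀ h)), T z⟫ : ℂ) = 0 := by
      intro h z hz
      set Φ : H →L[ℂ] ℂ := (innerSL ℂ (T z)) ∘L (J ∘L (T ∘L X₀)) with hΦ_def
      have hΦapp : ∀ y : H, Φ y = (⟪T z, J (T (X₀ y))⟫ : ℂ) := fun y => rfl
      have hΦ0 : Φ = 0 := by
        refine ContinuousLinearMap.ext_on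
          (Submodule.dense_iff_topologicalClosure_eq_top.mpr b.dense_span) ?_
        intro x hx
        obtain ⟨i, rfl⟩ := hx
        rw [hΦapp, ContinuousLinearMap.zero_apply, ← inner_conj_symm, hbasis i z hz, map_zero]
      have hΦh : (⟪T z, J (T (X₀ h))⟫ : ℂ) = 0 := by
        rw [← hΦapp, hΦ0, ContinuousLinearMap.zero_apply]
      rw [← inner_conj_symm, hΦh, map_zero]
    refine ⟨X₀, fun h => ?_⟩
    have hVz : V (X₀ h - h) = 0 := by rw [map_sub, hVX₀' h, sub_self]
    exact min_of_orth hJsa hnn ⟨X₀ h - h, hVz, by abel⟩ (fun m hm => horth h m hm)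
  tfae_finish
end
end

section
/- Let T, V, B₀ ∈ L(H), let ρ ∈ ℝ with ρ ≠ 0, and let X₀ ∈ L(H). Then the following are equivalent: (a) for every X ∈ L(H), the operator ((TX)^#(TX) + ρ(VX−B₀)^#(VX−B₀)) − ((TX₀)^#(TX₀) + ρ(VX₀−B₀)^#(VX₀−B₀)) is Krein-positive; (b) T^#T + ρV^#V is Krein-positive and (T^#T + ρV^#V) X₀ = ρ V^# B₀. -/
open ContinuousLinearMap

noncomputable section

variable {H : Type*} [NormedAddCommGroup H] [InnerProductSpace ℂ H] [CompleteSpace H]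

/-- An operator `S ∈ L(H)` is Krein-positive: `S^# = S` and `[Sx,x] ≥ 0` for all `x`. -/
def KreinPositive (J S : H →L[ℂ] H) : Prop :=
  kadj J S = S ∧ ∀ x : H, 0 ≤ (inner ℂ (J (S x)) x : ℂ).re

/-- The smoothing error operator `(TX)^#(TX) + ρ(VX−B₀)^#(VX−B₀)`. -/
def smoothOp (J T V B₀ : H →L[ℂ] H) (ρ : ℝ) (X : H →L[ℂ] H) : H →L[ℂ] H :=
  kadj J (T ∘L X) ∘L (T ∘L X) +
    (ρ : ℂ) • (kadj J (V ∘L X - B₀) ∘L (V ∘L X - B₀))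

section helpers
variable (J : H →L[ℂ] H)

lemma kadj_apply (S : H →L[ℂ] H) (x : H) : kadj J S x = J (adjoint S (J x)) := rfl

lemma exists_clm_apply_eq (x w : H) (hx : x ≠ 0) : ∃ Y : H →L[ℂ] H, Y x = w := by
  refine ⟨((‖x‖ : ℂ)^2)⁻¹ • (innerSL ℂ x).smulRight w, ?_⟩
  simp [smulRight_apply, inner_self_eq_norm_sq_to_K, smul_smul]
  rw [inv_mul_cancel₀ (by simpa using pow_ne_zero 2 (by exact_mod_cast norm_ne_zero_iff.mpr hx : (‖x‖:ℂ) ≠ 0))]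
  simp

variable (hpt : ∀ y : H, J (J y) = y)
include hpt

lemma kadj_comp (S W : H →L[ℂ] H) : kadj J (S ∘L W) = kadj J W ∘L kadj J S := by
  ext x; simp [kadj_apply, adjoint_comp, hpt]

omit hpt in
lemma kadj_sub (S W : H →L[ℂ] H) : kadj J (S - W) = kadj J S - kadj J W := by
  ext x; simp [kadj_apply, map_sub]

omit hpt in
lemma kadj_add (S W : H →L[ℂ] H) : kadj J (S + W) = kadj J S + kadj J W := by
  ext x; simp [kadj_apply, map_add]

omit hpt in
lemma kadj_zero : kadj J (0 : H →L[ℂ] H) = 0 := by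
  ext x; simp [kadj_apply]

omit hpt in
lemma kadj_smul_real (r : ℝ) (S : H →L[ℂ] H) : kadj J ((r : ℂ) • S) = (r : ℂ) • kadj J S := by
  unfold kadj
  rw [← star_eq_adjoint, star_smul]
  ext x
  simp [Complex.conj_ofReal, star_eq_adjoint]

lemma inner_kadj_apply (S : H →L[ℂ] H) (a y : H) :
    (inner ℂ (J (kadj J S a)) y : ℂ) = inner ℂ (J a) (S y) := by
  simp [kadj_apply, hpt, adjoint_inner_left]

variable (hJsa : IsSelfAdjoint J)
include hJsa

lemma kadj_invol (S : H →L[ℂ] H) : kadj J (kadj J S) = S := by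
  ext x
  simp [kadj, adjoint_comp, adjoint_adjoint, hJsa.adjoint_eq, hpt]

omit hpt in
lemma inner_J_re_symm (a b : H) : (inner ℂ (J a) b : ℂ).re = (inner ℂ (J b) a : ℂ).re := by
  have h1 : (inner ℂ (J a) b : ℂ) = inner ℂ a (J b) := by
    conv_lhs => rw [← hJsa.adjoint_eq]
    rw [adjoint_inner_left]
  rw [h1, ← inner_conj_symm (J b) a]
  exact (Complex.conj_re _).symm

variable (T V B₀ : H →L[ℂ] H) (ρ : ℝ) (X₀ : H →L[ℂ] H)

lemma smooth_diff (X : H →L[ℂ] H) :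
    smoothOp J T V B₀ ρ X - smoothOp J T V B₀ ρ X₀ =
      kadj J (X - X₀) ∘L ((kadj J T ∘L T + (ρ:ℂ) • (kadj J V ∘L V)) ∘L (X - X₀))
      + kadj J (X - X₀) ∘L ((kadj J T ∘L T + (ρ:ℂ) • (kadj J V ∘L V)) ∘L X₀
          - (ρ:ℂ) • (kadj J V ∘L B₀))
      + kadj J ((kadj J T ∘L T + (ρ:ℂ) • (kadj J V ∘L V)) ∘L X₀
          - (ρ:ℂ) • (kadj J V ∘L B₀)) ∘L (X - X₀) := by
  unfold smoothOp
  simp only [kadj_comp J hpt, kadj_sub J, kadj_add J, kadj_smul_real J,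
    kadj_invol J hpt hJsa]
  simp only [comp_add, add_comp, comp_sub, sub_comp, smul_comp, comp_smul, comp_assoc,
    smul_sub, smul_add]
  module

end helpers

/-- `X₀` is a Krein-order minimizer of
`X ↦ (TX)^#(TX) + ρ(VX−B₀)^#(VX−B₀)` iff `T^#T + ρV^#V` is Krein-positive and
`(T^#T + ρV^#V)X₀ = ρV^#B₀`. -/
theorem stmt14
    [TopologicalSpace.SeparableSpace H]
    (J : H →L[ℂ] H) (hJsa : IsSelfAdjoint J) (hJ2 : J ∘L J = 1)
    (T V B₀ : H →L[ℂ] H) (ρ : ℝ) (hρ : ρ ≠ 0) (X₀ : H →L[ℂ] H) :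
    (∀ X : H →L[ℂ] H,
        KreinPositive J (smoothOp J T V B₀ ρ X - smoothOp J T V B₀ ρ X₀)) ↔
      (KreinPositive J (kadj J T ∘L T + (ρ : ℂ) • (kadj J V ∘L V)) ∧
        (kadj J T ∘L T + (ρ : ℂ) • (kadj J V ∘L V)) ∘L X₀ =
          (ρ : ℂ) • (kadj J V ∘L B₀)) := by
  have hpt : ∀ y : H, J (J y) = y := fun y => by
    have h := ContinuousLinearMap.ext_iff.mp hJ2 y
    simpa using h
  set Aop := kadj J T ∘L T + (ρ : ℂ) • (kadj J V ∘L V) with hAop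
  set Cop := Aop ∘L X₀ - (ρ : ℂ) • (kadj J V ∘L B₀) with hCop
  -- key pointwise formula
  have key : ∀ (X : H →L[ℂ] H) (x : H),
      (inner ℂ (J ((smoothOp J T V B₀ ρ X - smoothOp J T V B₀ ρ X₀) x)) x : ℂ).re
        = (inner ℂ (J (Aop ((X - X₀) x))) ((X - X₀) x) : ℂ).re
          + 2 * (inner ℂ (J (Cop x)) ((X - X₀) x) : ℂ).re := by
    intro X x
    rw [smooth_diff J hpt hJsa T V B₀ ρ X₀ X, ← hAop, ← hCop]
    simp only [ContinuousLinearMap.add_apply, ContinuousLinearMap.comp_apply, map_add,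
      inner_add_left, Complex.add_re, inner_kadj_apply J hpt]
    rw [inner_J_re_symm J hJsa ((X - X₀) x) (Cop x)]
    ring
  have hAk : kadj J Aop = Aop := by
    rw [hAop]
    simp only [kadj_add J, kadj_smul_real J, kadj_comp J hpt, kadj_invol J hpt hJsa]
  constructor
  · intro h
    -- first: Cop = 0
    have hC0 : ∀ x : H, Cop x = 0 := by
      intro x
      rcases eq_or_ne x 0 with hx | hx
      · simp [hx]
      · have hw : ∀ w : H,
            0 ≤ (inner ℂ (J (Aop w)) w : ℂ).re + 2 * (inner ℂ (J (Cop x)) w : ℂ).re := by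
          intro w
          obtain ⟨Y, hY⟩ := exists_clm_apply_eq x w hx
          have h1 := (h (X₀ + Y)).2 x
          rw [key (X₀ + Y) x, add_sub_cancel_left, hY] at h1
          exact h1
        have hv : ∀ v : H, (inner ℂ (J (Cop x)) v : ℂ) = 0 := by
          intro v
          set c : ℂ := inner ℂ (J (Cop x)) v with hc
          set q : ℝ := (inner ℂ (J (Aop v)) v : ℂ).re with hq
          have hμ : ∀ μ : ℂ, 0 ≤ Complex.normSq μ * q + 2 * (μ * c).re := by
            intro μ
            have h0 := hw (μ • v)
            rw [map_smul, map_smul, inner_smul_left, inner_smul_right, inner_smul_right,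
              ← mul_assoc, ← Complex.normSq_eq_conj_mul_self, Complex.re_ofReal_mul] at h0
            exact h0
          by_contra hcne
          have hn : 0 < Complex.normSq c := Complex.normSq_pos.mpr hcne
          set t : ℝ := (|q| + 1)⁻¹ with htdef
          have ht : 0 < t := by positivity
          have htq : t * (|q| + 1) = 1 := inv_mul_cancel₀ (by positivity)
          have h2 := hμ (-(t:ℂ) * (starRingEnd ℂ) c)
          have e1 : Complex.normSq (-(t:ℂ) * (starRingEnd ℂ) c)
              = t ^ 2 * Complex.normSq c := by
            rw [Complex.normSq_mul, Complex.normSq_conj]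
            simp [sq]
          have e2 : ((-(t:ℂ) * (starRingEnd ℂ) c) * c).re = -(t * Complex.normSq c) := by
            have e3 : (-(t:ℂ) * (starRingEnd ℂ) c) * c = -(t:ℂ) * (Complex.normSq c : ℂ) := by
              rw [mul_assoc, ← Complex.normSq_eq_conj_mul_self]
            rw [e3]
            simp
          rw [e1, e2] at h2
          nlinarith [mul_pos ht hn, le_abs_self q, sq_nonneg t,
            mul_nonneg (mul_nonneg (sq_nonneg t) hn.le) (sub_nonneg.mpr (le_abs_self q))]
        have hJC := inner_self_eq_zero.mp (hv (J (Cop x)))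
        rw [← hpt (Cop x), hJC, map_zero]
    have hCeq : Cop = 0 := by ext x; simp [hC0 x]
    have heq : Aop ∘L X₀ = (ρ : ℂ) • (kadj J V ∘L B₀) := by
      have := hCeq
      rw [hCop] at this
      exact sub_eq_zero.mp this
    refine ⟨⟨hAk, ?_⟩, heq⟩
    intro x
    have h1 := (h (X₀ + 1)).2 x
    rw [key (X₀ + 1) x, add_sub_cancel_left] at h1
    simpa [hC0 x] using h1
  · rintro ⟨⟨_, hApos⟩, heq⟩ X
    have hCeq : Cop = 0 := by rw [hCop]; exact sub_eq_zero.mpr heq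
    constructor
    · rw [smooth_diff J hpt hJsa T V B₀ ρ X₀ X, ← hAop, ← hCop, hCeq]
      simp only [comp_zero, zero_comp, add_zero, kadj_zero J]
      simp only [kadj_comp J hpt, kadj_invol J hpt hJsa, hAk, comp_assoc]
    · intro x
      rw [key X x]
      simpa [hCeq] using hApos ((X - X₀) x)
end
end

section
/- Let T, V, B₀ ∈ L(H) be trace class, let ρ ∈ ℝ with ρ ≠ 0, and suppose T^#T + ρV^#V is Krein-positive. Then the following are equivalent: (i) there exists X₀ ∈ L(H) such that tr_J((TX₀)^#(TX₀)) + ρ tr_J((VX₀−B₀)^#(VX₀−B₀)) ≤ tr_J((TX)^#(TX)) + ρ tr_J((VX−B₀)^#(VX−B₀)) for every X ∈ L(H); (ii) the equation (T^#T + ρV^#V) X = ρ V^# B₀ admits a solution X ∈ L(H). -/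
open ContinuousLinearMap

noncomputable section

variable {H : Type*} [NormedAddCommGroup H] [InnerProductSpace ℂ H] [CompleteSpace H]

/- ------------------------------------------------------------------ -/
/- Auxiliary material                                                  -/
/- ------------------------------------------------------------------ -/

set_option linter.unusedSectionVars false

open scoped ENNReal NNReal

local notation "⟪" x ", " y "⟫" => @inner ℂ _ _ x y

section analytic
variable {ι : Type*}

lemma my_parseval (b : HilbertBasis ι ℂ H) (x : H) :
    HasSum (fun i => ‖(⟪b i, x⟫ : ℂ)‖ ^ 2) (‖x‖ ^ 2) := by
  have h := lp.hasSum_norm (p := 2) (by norm_num) (b.repr x)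
  simp only [ENNReal.toReal_ofNat] at h
  have h2 : ‖b.repr x‖ = ‖x‖ := b.repr.norm_map x
  rw [h2] at h
  have h3 : ∀ (y : ℝ), y ^ (2:ℝ) = y ^ (2:ℕ) := fun y => by
    rw [show (2:ℝ) = ((2:ℕ):ℝ) by norm_num, Real.rpow_natCast]
  simp only [h3, b.repr_apply_apply] at h
  exact h

lemma my_parseval_ennreal (b : HilbertBasis ι ℂ H) (x : H) :
    ∑' i, (‖(⟪b i, x⟫ : ℂ)‖₊ : ℝ≥0∞) ^ 2 = (‖x‖₊ : ℝ≥0∞) ^ 2 := by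
  have h := my_parseval b x
  have h1 : ENNReal.ofReal (∑' i, ‖(⟪b i, x⟫ : ℂ)‖ ^ 2)
      = ∑' i, ENNReal.ofReal (‖(⟪b i, x⟫ : ℂ)‖ ^ 2) :=
    ENNReal.ofReal_tsum_of_nonneg (fun i => by positivity) h.summable
  rw [h.tsum_eq] at h1
  have h2 : ∀ (y : H), ENNReal.ofReal (‖y‖ ^ 2) = (‖y‖₊ : ℝ≥0∞) ^ 2 := fun y => by
    rw [ENNReal.ofReal_pow (norm_nonneg _), ofReal_norm, enorm_eq_nnnorm]
  have h3 : ∀ (z : ℂ), ENNReal.ofReal (‖z‖ ^ 2) = (‖z‖₊ : ℝ≥0∞) ^ 2 := fun z => by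
    rw [ENNReal.ofReal_pow (norm_nonneg _), ofReal_norm, enorm_eq_nnnorm]
  rw [h2] at h1
  rw [h1]
  exact tsum_congr fun i => (h3 _).symm

lemma my_adjoint_sum (b : HilbertBasis ι ℂ H) (S : H →L[ℂ] H) :
    ∑' i, (‖S (b i)‖₊ : ℝ≥0∞) ^ 2 = ∑' j, (‖(adjoint S) (b j)‖₊ : ℝ≥0∞) ^ 2 := by
  calc ∑' i, (‖S (b i)‖₊ : ℝ≥0∞) ^ 2
      = ∑' i, ∑' j, (‖(⟪b j, S (b i)⟫ : ℂ)‖₊ : ℝ≥0∞) ^ 2 :=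
        tsum_congr fun i => (my_parseval_ennreal b _).symm
    _ = ∑' j, ∑' i, (‖(⟪b j, S (b i)⟫ : ℂ)‖₊ : ℝ≥0∞) ^ 2 := ENNReal.tsum_comm
    _ = ∑' j, ∑' i, (‖(⟪b i, (adjoint S) (b j)⟫ : ℂ)‖₊ : ℝ≥0∞) ^ 2 := by
        refine tsum_congr fun j => tsum_congr fun i => ?_
        have hn : ‖(⟪b j, S (b i)⟫ : ℂ)‖ = ‖(⟪b i, (adjoint S) (b j)⟫ : ℂ)‖ := by
          rw [← adjoint_inner_left, norm_inner_symm]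
        rw [show (‖(⟪b j, S (b i)⟫ : ℂ)‖₊) = ‖(⟪b i, (adjoint S) (b j)⟫ : ℂ)‖₊ from
          NNReal.coe_injective (by simpa using hn)]
    _ = ∑' j, (‖(adjoint S) (b j)‖₊ : ℝ≥0∞) ^ 2 := tsum_congr fun j => my_parseval_ennreal b _

lemma my_hs_iff (b : HilbertBasis ι ℂ H) (S : H →L[ℂ] H) :
    IsHilbertSchmidt b S ↔ ∑' i, (‖S (b i)‖₊ : ℝ≥0∞) ^ 2 ≠ ⊤ := by
  unfold IsHilbertSchmidt
  rw [show (fun i => ‖S (b i)‖ ^ 2) = (fun i => ((‖S (b i)‖₊ ^ 2 : ℝ≥0) : ℝ)) by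
    funext i; push_cast; rfl]
  rw [NNReal.summable_coe, ← ENNReal.tsum_coe_ne_top_iff_summable]
  push_cast
  rfl

lemma my_hs_comp (b : HilbertBasis ι ℂ H) {S : H →L[ℂ] H}
    (h : IsHilbertSchmidt b S) (X : H →L[ℂ] H) : IsHilbertSchmidt b (S ∘L X) := by
  rw [my_hs_iff] at h ⊢
  rw [my_adjoint_sum]
  have hb : ∀ j, (‖(adjoint (S ∘L X)) (b j)‖₊ : ℝ≥0∞) ^ 2 ≤
      (‖adjoint X‖₊ : ℝ≥0∞) ^ 2 * (‖(adjoint S) (b j)‖₊ : ℝ≥0∞) ^ 2 := by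
    intro j
    rw [adjoint_comp]
    have h' : ‖(adjoint X) ((adjoint S) (b j))‖₊ ≤ ‖adjoint X‖₊ * ‖(adjoint S) (b j)‖₊ :=
      (adjoint X).le_opNorm _
    calc (‖(adjoint X ∘L adjoint S) (b j)‖₊ : ℝ≥0∞) ^ 2
        ≤ ((‖adjoint X‖₊ * ‖(adjoint S) (b j)‖₊ : ℝ≥0) : ℝ≥0∞) ^ 2 := by
          gcongr
          exact_mod_cast h'
      _ = (‖adjoint X‖₊ : ℝ≥0∞) ^ 2 * (‖(adjoint S) (b j)‖₊ : ℝ≥0∞) ^ 2 := by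
          push_cast; ring
  refine ne_top_of_le_ne_top ?_ (Summable.tsum_le_tsum hb ENNReal.summable ENNReal.summable)
  rw [ENNReal.tsum_mul_left, ← my_adjoint_sum]
  exact ENNReal.mul_ne_top (by simp) h

lemma my_tc_summable (b : HilbertBasis ι ℂ H) {M : H →L[ℂ] H}
    (h : IsTraceClass b M) (X : H →L[ℂ] H) : Summable fun i => ‖M (X (b i))‖ ^ 2 := by
  obtain ⟨S₁, S₂, h1, h2, rfl⟩ := h
  have hs : IsHilbertSchmidt b (S₂ ∘L X) := my_hs_comp b h2 X
  refine Summable.of_nonneg_of_le (fun i => by positivity) (fun i => ?_)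
    (hs.mul_left (‖S₁‖ ^ 2))
  have h' : ‖S₁ (S₂ (X (b i)))‖ ≤ ‖S₁‖ * ‖S₂ (X (b i))‖ := S₁.le_opNorm _
  calc ‖(S₁ ∘L S₂) (X (b i))‖ ^ 2 ≤ (‖S₁‖ * ‖S₂ (X (b i))‖) ^ 2 := by
        simpa using pow_le_pow_left₀ (norm_nonneg _) h' 2
    _ = ‖S₁‖ ^ 2 * ‖(S₂ ∘L X) (b i)‖ ^ 2 := by simp [mul_pow]
end analytic

/-- Real bilinear form `[u,v].re`. -/
def Bf (J : H →L[ℂ] H) (u v : H) : ℝ := (⟪J u, v⟫ : ℂ).re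

/-- Real quadratic form `[u,u].re`. -/
def Qf (J : H →L[ℂ] H) (u : H) : ℝ := Bf J u u

section alg
variable {J : H →L[ℂ] H}

lemma JJapply (hJ2 : J ∘L J = 1) (y : H) : J (J y) = y := by
  have := ContinuousLinearMap.ext_iff.mp hJ2 y
  simpa using this

lemma Jinner (hJsa : IsSelfAdjoint J) (u v : H) : (⟪J u, v⟫ : ℂ) = ⟪u, J v⟫ := by
  conv_lhs => rw [← hJsa.adjoint_eq]
  rw [adjoint_inner_left]

lemma bf_symm (hJsa : IsSelfAdjoint J) (u v : H) : Bf J u v = Bf J v u := by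
  unfold Bf
  have h : (⟪u, J v⟫ : ℂ) = starRingEnd ℂ (⟪J v, u⟫ : ℂ) := (inner_conj_symm _ _).symm
  rw [Jinner hJsa, h, Complex.conj_re]

lemma bf_add_right (u v w : H) : Bf J u (v + w) = Bf J u v + Bf J u w := by
  unfold Bf; rw [inner_add_right]; exact Complex.add_re _ _

lemma bf_sub_left (u v w : H) : Bf J (u - v) w = Bf J u w - Bf J v w := by
  unfold Bf; rw [map_sub, inner_sub_left]; exact Complex.sub_re _ _

lemma bf_neg_right (u v : H) : Bf J u (-v) = -Bf J u v := by
  unfold Bf; rw [inner_neg_right]; exact Complex.neg_re _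

lemma bf_zero_right (u : H) : Bf J u 0 = 0 := by
  unfold Bf; rw [inner_zero_right]; rfl

lemma bf_smul_right (s : ℝ) (u v : H) : Bf J u ((s : ℂ) • v) = s * Bf J u v := by
  unfold Bf; rw [inner_smul_right]; exact Complex.re_ofReal_mul _ _

lemma bf_smul_left (s : ℝ) (u v : H) : Bf J ((s : ℂ) • u) v = s * Bf J u v := by
  unfold Bf; rw [map_smul, inner_smul_left]
  simp [Complex.conj_ofReal, Complex.re_ofReal_mul]

lemma qf_expand (hJsa : IsSelfAdjoint J) (u v : H) :
    Qf J (u + v) = Qf J u + 2 * Bf J u v + Qf J v := by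
  unfold Qf
  have h1 : Bf J (u + v) (u + v) = Bf J (u + v) u + Bf J (u + v) v := bf_add_right _ _ _
  have h2 : Bf J (u + v) u = Bf J u u + Bf J v u := by
    rw [bf_symm hJsa, bf_add_right, bf_symm hJsa u, bf_symm hJsa v]
  have h3 : Bf J (u + v) v = Bf J u v + Bf J v v := by
    rw [bf_symm hJsa, bf_add_right, bf_symm hJsa u, bf_symm hJsa v]
  have h4 : Bf J v u = Bf J u v := bf_symm hJsa _ _
  linarith

lemma qf_neg (u : H) : Qf J (-u) = Qf J u := by
  unfold Qf Bf; rw [map_neg, inner_neg_neg]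

lemma qf_real_smul (s : ℝ) (u : H) : Qf J ((s : ℂ) • u) = s ^ 2 * Qf J u := by
  unfold Qf
  rw [bf_smul_left, bf_smul_right]; ring

lemma qf_abs_le (u : H) : |Qf J u| ≤ ‖J‖ * ‖u‖ ^ 2 := by
  unfold Qf Bf
  calc |(⟪J u, u⟫ : ℂ).re| ≤ ‖(⟪J u, u⟫ : ℂ)‖ := by
        exact Complex.abs_re_le_norm _
    _ ≤ ‖J u‖ * ‖u‖ := norm_inner_le_norm _ _
    _ ≤ ‖J‖ * ‖u‖ * ‖u‖ := by
        have := J.le_opNorm u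
        have h0 : (0:ℝ) ≤ ‖u‖ := norm_nonneg _
        nlinarith
    _ = ‖J‖ * ‖u‖ ^ 2 := by ring

lemma inner_J_kadj (hJ2 : J ∘L J = 1) (M : H →L[ℂ] H) (x y : H) :
    (⟪J ((kadj J M ∘L M) x), y⟫ : ℂ) = ⟪J (M x), M y⟫ := by
  simp only [kadj, comp_apply]
  rw [JJapply hJ2, adjoint_inner_left]

lemma inner_J_A (hJ2 : J ∘L J = 1) (T V : H →L[ℂ] H) (ρ : ℝ) (x y : H) :
    (⟪J ((kadj J T ∘L T + (ρ : ℂ) • (kadj J V ∘L V)) x), y⟫ : ℂ)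
      = ⟪J (T x), T y⟫ + (ρ : ℂ) * ⟪J (V x), V y⟫ := by
  have h1 := inner_J_kadj hJ2 T x y
  have h2 := inner_J_kadj hJ2 V x y
  simp only [add_apply, smul_apply, map_add, map_smul, inner_add_left, inner_smul_left,
    Complex.conj_ofReal] at *
  rw [h1, h2]

lemma inner_J_rhs (hJ2 : J ∘L J = 1) (V B₀ : H →L[ℂ] H) (ρ : ℝ) (x y : H) :
    (⟪J (((ρ : ℂ) • (kadj J V ∘L B₀)) x), y⟫ : ℂ) = (ρ : ℂ) * ⟪J (B₀ x), V y⟫ := by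
  simp only [smul_apply, map_smul, inner_smul_left, Complex.conj_ofReal, comp_apply, kadj]
  rw [JJapply hJ2, adjoint_inner_left]

/-- difference identity for the `⇐` direction -/
lemma quad_diff (hJsa : IsSelfAdjoint J) (ρ : ℝ) (a a₀ c c₀ w : H)
    (hrel : Bf J a₀ (a - a₀) + ρ * Bf J c₀ (c - c₀) = ρ * Bf J w (c - c₀)) :
    Qf J a₀ + ρ * Qf J (c₀ - w) + (Qf J (a - a₀) + ρ * Qf J (c - c₀))
      = Qf J a + ρ * Qf J (c - w) := by
  have e1 : Qf J a = Qf J a₀ + 2 * Bf J a₀ (a - a₀) + Qf J (a - a₀) := by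
    have := qf_expand hJsa a₀ (a - a₀)
    rwa [add_sub_cancel] at this
  have e2 : Qf J (c - w) = Qf J (c₀ - w) + 2 * Bf J (c₀ - w) (c - c₀) + Qf J (c - c₀) := by
    have := qf_expand hJsa (c₀ - w) (c - c₀)
    rwa [sub_add_sub_cancel'] at this
  have e3 : Bf J (c₀ - w) (c - c₀) = Bf J c₀ (c - c₀) - Bf J w (c - c₀) := bf_sub_left _ _ _
  rw [e1, e2, e3]
  linear_combination (-2:ℝ) * hrel

/-- expansion identity for the `⇒` direction -/
lemma quad_exp (hJsa : IsSelfAdjoint J) (ρ : ℝ) (a₀ aY c₀ cY w : H) :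
    Qf J (a₀ + aY) + ρ * Qf J ((c₀ + cY) - w)
      = (Qf J a₀ + ρ * Qf J (c₀ - w))
        + ((Qf J aY + ρ * Qf J cY)
          + 2 * (Bf J a₀ aY + ρ * Bf J c₀ cY - ρ * Bf J w cY)) := by
  have e1 := qf_expand hJsa a₀ aY
  have e2 : Qf J ((c₀ + cY) - w) = Qf J (c₀ - w) + 2 * Bf J (c₀ - w) cY + Qf J cY := by
    have := qf_expand hJsa (c₀ - w) cY
    rwa [show c₀ - w + cY = (c₀ + cY) - w by abel] at this
  have e3 : Bf J (c₀ - w) cY = Bf J c₀ cY - Bf J w cY := bf_sub_left _ _ _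
  rw [e1, e2, e3]
  ring

lemma trJ_eq {ι : Type*} (hJ2 : J ∘L J = 1) (b : HilbertBasis ι ℂ H) (S : H →L[ℂ] H) :
    trJ J b (kadj J S ∘L S) = ∑' i, Qf J (S (b i)) := by
  refine tsum_congr fun i => ?_
  unfold Qf Bf
  exact congrArg Complex.re (inner_J_kadj hJ2 S (b i) (b i))

lemma pos_pt {T V : H →L[ℂ] H} {ρ : ℝ} (hJ2 : J ∘L J = 1)
    (hpos : ∀ x : H, 0 ≤ (inner ℂ (J ((kadj J T ∘L T + (ρ : ℂ) • (kadj J V ∘L V)) x)) x : ℂ).re)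
    (x : H) : 0 ≤ Qf J (T x) + ρ * Qf J (V x) := by
  have h := hpos x
  rw [inner_J_A hJ2] at h
  simpa [Qf, Bf, Complex.add_re, Complex.re_ofReal_mul] using h
end alg

/-- for trace-class `T, V, B₀` with `T^#T + ρV^#V` Krein-positive, the
indefinite operator smoothing problem has a solution iff the normal equation
`(T^#T + ρV^#V)X = ρV^#B₀` has a solution. -/
theorem stmt15 {ι : Type*}
    [TopologicalSpace.SeparableSpace H]
    (J : H →L[ℂ] H) (hJsa : IsSelfAdjoint J) (hJ2 : J ∘L J = 1)
    (b : HilbertBasis ι ℂ H)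
    (T V B₀ : H →L[ℂ] H) (ρ : ℝ) (hρ : ρ ≠ 0)
    (hTtc : IsTraceClass b T) (hVtc : IsTraceClass b V) (hB₀tc : IsTraceClass b B₀)
    (hpos : KreinPositive J (kadj J T ∘L T + (ρ : ℂ) • (kadj J V ∘L V))) :
    (∃ X₀ : H →L[ℂ] H, ∀ X : H →L[ℂ] H,
        trJ J b (kadj J (T ∘L X₀) ∘L (T ∘L X₀)) +
            ρ * trJ J b (kadj J (V ∘L X₀ - B₀) ∘L (V ∘L X₀ - B₀)) ≤
          trJ J b (kadj J (T ∘L X) ∘L (T ∘L X)) +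
            ρ * trJ J b (kadj J (V ∘L X - B₀) ∘L (V ∘L X - B₀))) ↔
      (∃ X : H →L[ℂ] H,
        (kadj J T ∘L T + (ρ : ℂ) • (kadj J V ∘L V)) ∘L X =
          (ρ : ℂ) • (kadj J V ∘L B₀)) := by
  classical
  have hposJ : ∀ x : H, 0 ≤ Qf J (T x) + ρ * Qf J (V x) := pos_pt hJ2 hpos.2
  -- the pointwise functional
  set G : (H →L[ℂ] H) → ι → ℝ :=
    fun X i => Qf J (T (X (b i))) + ρ * Qf J (V (X (b i)) - B₀ (b i)) with hGdef
  -- summability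
  have hsum1 : ∀ X : H →L[ℂ] H, Summable fun i => Qf J (T (X (b i))) := by
    intro X
    exact Summable.of_abs (Summable.of_nonneg_of_le (fun i => abs_nonneg _)
      (fun i => qf_abs_le _) ((my_tc_summable b hTtc X).mul_left ‖J‖))
  have hB0s : Summable fun i => ‖B₀ (b i)‖ ^ 2 := by
    simpa using my_tc_summable b hB₀tc 1
  have hsum2 : ∀ X : H →L[ℂ] H, Summable fun i => Qf J (V (X (b i)) - B₀ (b i)) := by
    intro X
    apply Summable.of_abs
    have hmaj : Summable fun i => ‖J‖ * (2 * ‖V (X (b i))‖ ^ 2 + 2 * ‖B₀ (b i)‖ ^ 2) :=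
      ((((my_tc_summable b hVtc X).mul_left 2).add (hB0s.mul_left 2)).mul_left ‖J‖)
    refine Summable.of_nonneg_of_le (fun i => abs_nonneg _) (fun i => ?_) hmaj
    calc |Qf J (V (X (b i)) - B₀ (b i))| ≤ ‖J‖ * ‖V (X (b i)) - B₀ (b i)‖ ^ 2 := qf_abs_le _
      _ ≤ ‖J‖ * (2 * ‖V (X (b i))‖ ^ 2 + 2 * ‖B₀ (b i)‖ ^ 2) := by
          have h1 := norm_sub_le (V (X (b i))) (B₀ (b i))
          have h2 : (0:ℝ) ≤ ‖J‖ := norm_nonneg _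
          have h3 : (0:ℝ) ≤ ‖V (X (b i))‖ := norm_nonneg _
          have h4 : (0:ℝ) ≤ ‖B₀ (b i)‖ := norm_nonneg _
          have h5 : (0:ℝ) ≤ ‖V (X (b i)) - B₀ (b i)‖ := norm_nonneg _
          have hd2 : ‖V (X (b i)) - B₀ (b i)‖ ^ 2
              ≤ 2 * ‖V (X (b i))‖ ^ 2 + 2 * ‖B₀ (b i)‖ ^ 2 := by
            nlinarith [sq_nonneg (‖V (X (b i))‖ - ‖B₀ (b i)‖)]
          exact mul_le_mul_of_nonneg_left hd2 h2
  have hsumG : ∀ X : H →L[ℂ] H, Summable (G X) :=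
    fun X => (hsum1 X).add ((hsum2 X).mul_left ρ)
  -- the functional equals the tsum of G
  have hf : ∀ X : H →L[ℂ] H,
      trJ J b (kadj J (T ∘L X) ∘L (T ∘L X)) +
        ρ * trJ J b (kadj J (V ∘L X - B₀) ∘L (V ∘L X - B₀)) = ∑' i, G X i := by
    intro X
    rw [trJ_eq hJ2, trJ_eq hJ2]
    have e1 : (fun i => Qf J ((T ∘L X) (b i))) = fun i => Qf J (T (X (b i))) := by
      funext i; simp
    have e2 : (fun i => Qf J ((V ∘L X - B₀) (b i))) = fun i => Qf J (V (X (b i)) - B₀ (b i)) := by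
      funext i; simp
    rw [e1, e2, ← tsum_mul_left, ← Summable.tsum_add (hsum1 X) ((hsum2 X).mul_left ρ)]
  constructor
  · -- minimizer implies solvable normal equation
    rintro ⟨X₀, hmin⟩
    have hminG : ∀ X : H →L[ℂ] H, (∑' i, G X₀ i) ≤ ∑' i, G X i := fun X => by
      have h := hmin X; rwa [hf X₀, hf X] at h
    -- linear term
    set lf : (H →L[ℂ] H) → ι → ℝ := fun Y i =>
      Bf J (T (X₀ (b i))) (T (Y (b i))) + ρ * Bf J (V (X₀ (b i))) (V (Y (b i)))
        - ρ * Bf J (B₀ (b i)) (V (Y (b i))) with hlfdef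
    set pf : (H →L[ℂ] H) → ι → ℝ := fun Y i =>
      Qf J (T (Y (b i))) + ρ * Qf J (V (Y (b i))) with hpfdef
    have hGid : ∀ (Y : H →L[ℂ] H) (i : ι),
        G (X₀ + Y) i = G X₀ i + (pf Y i + 2 * lf Y i) := by
      intro Y i
      have h := quad_exp hJsa ρ (T (X₀ (b i))) (T (Y (b i))) (V (X₀ (b i))) (V (Y (b i)))
        (B₀ (b i))
      simp only [hGdef, hlfdef, hpfdef, add_apply, map_add]
      exact h
    have hpneg : ∀ (Y : H →L[ℂ] H) (i : ι), pf (-Y) i = pf Y i := by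
      intro Y i; simp only [hpfdef, neg_apply, map_neg, qf_neg]
    have hlneg : ∀ (Y : H →L[ℂ] H) (i : ι), lf (-Y) i = -lf Y i := by
      intro Y i; simp only [hlfdef, neg_apply, map_neg, bf_neg_right]; ring
    have hsml : ∀ Y : H →L[ℂ] H, Summable fun i => pf Y i + 2 * lf Y i := by
      intro Y
      have h : (fun i => pf Y i + 2 * lf Y i) = fun i => G (X₀ + Y) i - G X₀ i := by
        funext i; rw [hGid]; ring
      rw [h]; exact (hsumG _).sub (hsumG X₀)
    have hsmld : ∀ Y : H →L[ℂ] H, Summable fun i => pf Y i - 2 * lf Y i := by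
      intro Y
      have h : (fun i => pf Y i - 2 * lf Y i) = fun i => pf (-Y) i + 2 * lf (-Y) i := by
        funext i; rw [hpneg, hlneg]; ring
      rw [h]; exact hsml (-Y)
    have hsmp : ∀ Y : H →L[ℂ] H, Summable (pf Y) := by
      intro Y
      have h := ((hsml Y).add (hsmld Y)).mul_left (1/2 : ℝ)
      refine h.congr fun i => ?_
      ring
    have hsmll : ∀ Y : H →L[ℂ] H, Summable (lf Y) := by
      intro Y
      have h := ((hsml Y).sub (hsmld Y)).mul_left (1/4 : ℝ)
      refine h.congr fun i => ?_
      ring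
    -- the linear functional vanishes
    have key : ∀ Y : H →L[ℂ] H, (∑' i, lf Y i) = 0 := by
      intro Y
      set P : ℝ := ∑' i, pf Y i with hP
      set L : ℝ := ∑' i, lf Y i with hL
      have hPnn : 0 ≤ P := tsum_nonneg fun i => hposJ (Y (b i))
      have hquad : ∀ s : ℝ, 0 ≤ s ^ 2 * P + 2 * s * L := by
        intro s
        have hid2 : ∀ i, G (X₀ + (s : ℂ) • Y) i
            = G X₀ i + (s ^ 2 * pf Y i + 2 * s * lf Y i) := by
          intro i
          rw [hGid ((s : ℂ) • Y) i]
          have hps : pf ((s : ℂ) • Y) i = s ^ 2 * pf Y i := by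
            simp only [hpfdef, smul_apply, map_smul, qf_real_smul]; ring
          have hls : lf ((s : ℂ) • Y) i = s * lf Y i := by
            simp only [hlfdef, smul_apply, map_smul, bf_smul_right]; ring
          rw [hps, hls]; ring
        have hmono := hminG (X₀ + (s : ℂ) • Y)
        have hsum' : Summable fun i => s ^ 2 * pf Y i + 2 * s * lf Y i :=
          ((hsmp Y).mul_left (s ^ 2)).add ((hsmll Y).mul_left (2 * s))
        have hts : (∑' i, G (X₀ + (s : ℂ) • Y) i)
            = (∑' i, G X₀ i) + (s ^ 2 * P + 2 * s * L) := by
          rw [tsum_congr hid2, Summable.tsum_add (hsumG X₀) hsum',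
            Summable.tsum_add ((hsmp Y).mul_left (s ^ 2)) ((hsmll Y).mul_left (2 * s)),
            tsum_mul_left, tsum_mul_left]
        rw [hts] at hmono
        linarith
      -- quadratic nonnegativity forces L = 0
      by_contra hLne
      have hd : (0:ℝ) < P + 1 := by linarith
      have h := hquad (-L / (P + 1))
      have he : (-L / (P + 1)) ^ 2 * P + 2 * (-L / (P + 1)) * L
          = -(L ^ 2 * (P + 2)) / (P + 1) ^ 2 := by
        field_simp
        ring
      rw [he] at h
      have h2 : 0 ≤ -(L ^ 2 * (P + 2)) := by
        have hpow : (0:ℝ) < (P + 1) ^ 2 := by positivity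
        have := mul_nonneg h (le_of_lt hpow)
        rwa [div_mul_cancel₀] at this
        exact ne_of_gt hpow
      have h3 : 0 < L ^ 2 := by positivity
      nlinarith
    -- rank-one perturbations: pointwise vanishing
    have hval : ∀ (i₀ : ι) (w : H),
        Bf J (T (X₀ (b i₀))) (T w) + ρ * Bf J (V (X₀ (b i₀))) (V w)
          - ρ * Bf J (B₀ (b i₀)) (V w) = 0 := by
      intro i₀ w
      set Y : H →L[ℂ] H := (innerSL ℂ (b i₀)).smulRight w with hY
      have hYapp : ∀ i, Y (b i) = if i₀ = i then w else 0 := by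
        intro i
        rw [hY]
        simp only [ContinuousLinearMap.smulRight_apply, innerSL_apply_apply]
        rw [orthonormal_iff_ite.mp b.orthonormal]
        split <;> simp
      have hzero : ∀ i, i ≠ i₀ → lf Y i = 0 := by
        intro i hi
        have : Y (b i) = 0 := by rw [hYapp, if_neg (fun h => hi h.symm)]
        simp only [hlfdef, this, map_zero, bf_zero_right]
        ring
      have htsum : (∑' i, lf Y i) = lf Y i₀ := tsum_eq_single i₀ hzero
      have hY0 : Y (b i₀) = w := by rw [hYapp]; simp
      have := key Y
      rw [htsum] at this
      simpa only [hlfdef, hY0] using this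
    -- conclude the operator identity
    have hz : ∀ i₀ : ι,
        ((kadj J T ∘L T + (ρ : ℂ) • (kadj J V ∘L V)) ∘L X₀
          - (ρ : ℂ) • (kadj J V ∘L B₀)) (b i₀) = 0 := by
      intro i₀
      set z : H := ((kadj J T ∘L T + (ρ : ℂ) • (kadj J V ∘L V)) ∘L X₀
          - (ρ : ℂ) • (kadj J V ∘L B₀)) (b i₀) with hzdef
      have hw : ∀ w : H, (⟪J z, w⟫ : ℂ).re = 0 := by
        intro w
        have e : (⟪J z, w⟫ : ℂ)
            = (⟪J (T (X₀ (b i₀))), T w⟫ + (ρ : ℂ) * ⟪J (V (X₀ (b i₀))), V w⟫)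
              - (ρ : ℂ) * ⟪J (B₀ (b i₀)), V w⟫ := by
          rw [hzdef]
          simp only [sub_apply, comp_apply, map_sub, inner_sub_left]
          rw [inner_J_A hJ2, inner_J_rhs hJ2]
        rw [e]
        have hv := hval i₀ w
        simp only [Bf] at hv
        simp only [Complex.sub_re, Complex.add_re, Complex.re_ofReal_mul]
        linarith
      have hJz : J z = 0 := by
        have hin : (⟪J z, J z⟫ : ℂ) = 0 := by
          apply Complex.ext
          · simpa using hw (J z)
          · exact inner_self_im (𝕜 := ℂ) (J z)
        exact inner_self_eq_zero.mp hin
      calc z = J (J z) := (JJapply hJ2 z).symm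
        _ = 0 := by rw [hJz, map_zero]
    have hdense : Dense ((Submodule.span ℂ (Set.range (⇑b)) : Submodule ℂ H) : Set H) :=
      Submodule.dense_iff_topologicalClosure_eq_top.mpr b.dense_span
    have hop : (kadj J T ∘L T + (ρ : ℂ) • (kadj J V ∘L V)) ∘L X₀
        - (ρ : ℂ) • (kadj J V ∘L B₀) = 0 := by
      apply ContinuousLinearMap.ext_on hdense
      rintro x ⟨i, rfl⟩
      simpa using hz i
    exact ⟨X₀, sub_eq_zero.mp hop⟩
  · -- solvable normal equation implies minimizer
    rintro ⟨Z, hZ⟩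
    refine ⟨Z, fun X => ?_⟩
    rw [hf Z, hf X]
    refine Summable.tsum_le_tsum (fun i => ?_) (hsumG Z) (hsumG X)
    -- pointwise comparison
    have hpt := ContinuousLinearMap.ext_iff.mp hZ (b i)
    have hrelC : (⟪J (T (Z (b i))), T (X (b i) - Z (b i))⟫ : ℂ)
        + (ρ : ℂ) * ⟪J (V (Z (b i))), V (X (b i) - Z (b i))⟫
        = (ρ : ℂ) * ⟪J (B₀ (b i)), V (X (b i) - Z (b i))⟫ := by
      have e := congrArg (fun u => (⟪J u, X (b i) - Z (b i)⟫ : ℂ)) hpt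
      simp only [comp_apply] at e
      rw [inner_J_A hJ2, inner_J_rhs hJ2] at e
      exact e
    have hrelR : Bf J (T (Z (b i))) (T (X (b i)) - T (Z (b i)))
        + ρ * Bf J (V (Z (b i))) (V (X (b i)) - V (Z (b i)))
        = ρ * Bf J (B₀ (b i)) (V (X (b i)) - V (Z (b i))) := by
      have e := congrArg Complex.re hrelC
      simp only [map_sub, Complex.add_re, Complex.re_ofReal_mul] at e
      simpa only [Bf, map_sub] using e
    have hposd := hposJ (X (b i) - Z (b i))
    rw [map_sub, map_sub] at hposd
    have hqd := quad_diff hJsa ρ (T (X (b i))) (T (Z (b i))) (V (X (b i))) (V (Z (b i)))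
      (B₀ (b i)) hrelR
    simp only [hGdef]
    linarith
end
end

section
/- Let A ∈ L(H), ρ ∈ ℝ with ρ ≠ 0, let W₁₁, W₂₂ ∈ L(H) be Krein-selfadjoint and let W₁₂ ∈ L(H). For h, x ∈ H define the real quadratic functional Q_h(x) := [W₁₁x + W₁₂(Ax−h), x] + ρ[ρ^{-1}W₁₂^#x + W₂₂(Ax−h), Ax−h], and call G ∈ L(H) an indefinite W-optimal inverse of A if Q_h(Gh) ≤ Q_h(x) for every h, x ∈ H. Then A admits an indefinite W-optimal inverse if and only if S := W₁₁ + W₁₂A + A^#W₁₂^# + ρA^#W₂₂A is Krein-positive and the equation SX = W₁₂ + ρA^#W₂₂ admits a solution X ∈ L(H). In this case, G ∈ L(H) is an indefinite W-optimal inverse of A if and only if SG = W₁₂ + ρA^#W₂₂. -/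
open ContinuousLinearMap

set_option linter.unusedSectionVars false
set_option maxHeartbeats 1000000

noncomputable section

variable {H : Type*} [NormedAddCommGroup H] [InnerProductSpace ℂ H] [CompleteSpace H]

/-- The real quadratic functional
`Q_h(x) = [W₁₁x + W₁₂(Ax−h), x] + ρ[ρ⁻¹W₁₂^#x + W₂₂(Ax−h), Ax−h]`. -/
def Qfun (J A W₁₁ W₁₂ W₂₂ : H →L[ℂ] H) (ρ : ℝ) (h x : H) : ℝ :=
  (inner ℂ (J (W₁₁ x + W₁₂ (A x - h))) x : ℂ).re +
    ρ * (inner ℂ (J ((ρ : ℂ)⁻¹ • kadj J W₁₂ x + W₂₂ (A x - h))) (A x - h) : ℂ).re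

namespace Stmt16

def c (J : H →L[ℂ] H) (u v : H) : ℂ := inner ℂ (J u) v

variable (J : H →L[ℂ] H)

lemma c_add_left (u u' v : H) : c J (u + u') v = c J u v + c J u' v := by
  simp [c, inner_add_left]

lemma c_sub_left (u u' v : H) : c J (u - u') v = c J u v - c J u' v := by
  simp [c, inner_sub_left]

lemma c_add_right (u v v' : H) : c J u (v + v') = c J u v + c J u v' := by
  simp [c, inner_add_right]

lemma c_sub_right (u v v' : H) : c J u (v - v') = c J u v - c J u v' := by
  simp [c, inner_sub_right]

lemma c_smul_left (z : ℂ) (u v : H) : c J (z • u) v = (starRingEnd ℂ) z * c J u v := by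
  simp [c, inner_smul_left, mul_comm]

lemma c_smul_right (z : ℂ) (u v : H) : c J u (z • v) = z * c J u v := by
  simp [c, inner_smul_right]

lemma c_conj_symm (hJsa : IsSelfAdjoint J) (u v : H) :
    c J u v = (starRingEnd ℂ) (c J v u) := by
  have hJad : ContinuousLinearMap.adjoint J = J := by
    rw [← ContinuousLinearMap.star_eq_adjoint]; exact hJsa
  have h1 : (inner ℂ (J u) v : ℂ) = inner ℂ u (J v) := by
    conv_lhs => rw [← hJad]
    exact ContinuousLinearMap.adjoint_inner_left J v u
  rw [c, c, h1, ← inner_conj_symm]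

lemma c_kadj_left (hJ2 : J ∘L J = 1) (A : H →L[ℂ] H) (u v : H) :
    c J (kadj J A u) v = c J u (A v) := by
  have hJJ : ∀ w : H, J (J w) = w := fun w => by
    have := congrArg (fun (T : H →L[ℂ] H) => T w) hJ2
    simpa using this
  simp only [c, kadj, ContinuousLinearMap.comp_apply, hJJ]
  exact ContinuousLinearMap.adjoint_inner_left A v (J u)

lemma c_kadj_right (hJsa : IsSelfAdjoint J) (hJ2 : J ∘L J = 1) (A : H →L[ℂ] H) (u v : H) :
    c J u (kadj J A v) = c J (A u) v := by
  have hJad : ContinuousLinearMap.adjoint J = J := by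
    rw [← ContinuousLinearMap.star_eq_adjoint]; exact hJsa
  have hJJ : ∀ w : H, J (J w) = w := fun w => by
    have := congrArg (fun (T : H →L[ℂ] H) => T w) hJ2
    simpa using this
  have hmove : ∀ x y : H, (inner ℂ x (J y) : ℂ) = inner ℂ (J x) y := fun x y => by
    conv_rhs => rw [← hJad]
    exact (ContinuousLinearMap.adjoint_inner_left J y x).symm
  simp only [c, kadj, ContinuousLinearMap.comp_apply]
  rw [hmove, hJJ, ContinuousLinearMap.adjoint_inner_right, hmove]

def b (J : H →L[ℂ] H) (u v : H) : ℝ := (c J u v).re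

lemma b_add_left (u u' v : H) : b J (u + u') v = b J u v + b J u' v := by
  simp [b, c_add_left]
lemma b_sub_left (u u' v : H) : b J (u - u') v = b J u v - b J u' v := by
  simp [b, c_sub_left]
lemma b_add_right (u v v' : H) : b J u (v + v') = b J u v + b J u v' := by
  simp [b, c_add_right]
lemma b_sub_right (u v v' : H) : b J u (v - v') = b J u v - b J u v' := by
  simp [b, c_sub_right]
lemma b_smul_left (t : ℝ) (u v : H) : b J ((t:ℂ) • u) v = t * b J u v := by
  rw [b, b, c_smul_left, Complex.conj_ofReal, Complex.re_ofReal_mul]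
lemma b_smul_right (t : ℝ) (u v : H) : b J u ((t:ℂ) • v) = t * b J u v := by
  rw [b, b, c_smul_right, Complex.re_ofReal_mul]
lemma b_symm (hJsa : IsSelfAdjoint J) (u v : H) : b J u v = b J v u := by
  rw [b, c_conj_symm J hJsa]; simp [b]
lemma b_kadj_left (hJ2 : J ∘L J = 1) (A : H →L[ℂ] H) (u v : H) :
    b J (kadj J A u) v = b J u (A v) := by
  rw [b, c_kadj_left J hJ2]; rfl
lemma b_zero_left (v : H) : b J 0 v = 0 := by simp [b, c]
lemma b_zero_right (u : H) : b J u 0 = 0 := by simp [b, c]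

end Stmt16

open Stmt16

/-- `A` admits an indefinite `W`-optimal inverse iff
`S := W₁₁ + W₁₂A + A^#W₁₂^# + ρA^#W₂₂A` is Krein-positive and the equation
`SX = W₁₂ + ρA^#W₂₂` is solvable; in this case the indefinite `W`-optimal inverses of `A`
are exactly the solutions `G` of `SG = W₁₂ + ρA^#W₂₂`. -/
theorem stmt16
    [TopologicalSpace.SeparableSpace H]
    (J : H →L[ℂ] H) (hJsa : IsSelfAdjoint J) (hJ2 : J ∘L J = 1)
    (A : H →L[ℂ] H) (ρ : ℝ) (hρ : ρ ≠ 0)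
    (W₁₁ W₂₂ W₁₂ : H →L[ℂ] H)
    (hW₁₁ : kadj J W₁₁ = W₁₁) (hW₂₂ : kadj J W₂₂ = W₂₂) :
    ((∃ G : H →L[ℂ] H, ∀ h x : H,
        Qfun J A W₁₁ W₁₂ W₂₂ ρ h (G h) ≤ Qfun J A W₁₁ W₁₂ W₂₂ ρ h x) ↔
      (KreinPositive J
          (W₁₁ + W₁₂ ∘L A + kadj J A ∘L kadj J W₁₂ +
            (ρ : ℂ) • (kadj J A ∘L (W₂₂ ∘L A))) ∧
        ∃ X : H →L[ℂ] H,
          (W₁₁ + W₁₂ ∘L A + kadj J A ∘L kadj J W₁₂ +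
              (ρ : ℂ) • (kadj J A ∘L (W₂₂ ∘L A))) ∘L X =
            W₁₂ + (ρ : ℂ) • (kadj J A ∘L W₂₂)))
    ∧
    ((∃ G : H →L[ℂ] H, ∀ h x : H,
        Qfun J A W₁₁ W₁₂ W₂₂ ρ h (G h) ≤ Qfun J A W₁₁ W₁₂ W₂₂ ρ h x) →
      ∀ G : H →L[ℂ] H,
        ((∀ h x : H,
            Qfun J A W₁₁ W₁₂ W₂₂ ρ h (G h) ≤ Qfun J A W₁₁ W₁₂ W₂₂ ρ h x) ↔
          (W₁₁ + W₁₂ ∘L A + kadj J A ∘L kadj J W₁₂ +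
              (ρ : ℂ) • (kadj J A ∘L (W₂₂ ∘L A))) ∘L G =
            W₁₂ + (ρ : ℂ) • (kadj J A ∘L W₂₂))) := by
  classical
  have hJJ : ∀ w : H, J (J w) = w := fun w => by
    have := congrArg (fun (T : H →L[ℂ] H) => T w) hJ2
    simpa using this
  set S : H →L[ℂ] H := W₁₁ + W₁₂ ∘L A + kadj J A ∘L kadj J W₁₂ +
      (ρ : ℂ) • (kadj J A ∘L (W₂₂ ∘L A)) with hSdef
  set T : H →L[ℂ] H := W₁₂ + (ρ : ℂ) • (kadj J A ∘L W₂₂) with hTdef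
  -- complex-form selfadjointness of W₁₁, W₂₂
  have cW11 : ∀ u v : H, c J (W₁₁ u) v = c J u (W₁₁ v) := by
    intro u v
    have h := c_kadj_left J hJ2 W₁₁ u v
    rw [hW₁₁] at h; exact h
  have cW22 : ∀ u v : H, c J (W₂₂ u) v = c J u (W₂₂ v) := by
    intro u v
    have h := c_kadj_left J hJ2 W₂₂ u v
    rw [hW₂₂] at h; exact h
  have bW22 : ∀ u v : H, b J (W₂₂ u) v = b J u (W₂₂ v) := by
    intro u v; rw [b, cW22]; rfl
  have bW12 : ∀ u v : H, b J (kadj J W₁₂ u) v = b J u (W₁₂ v) :=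
    fun u v => b_kadj_left J hJ2 W₁₂ u v
  -- the decomposition of Qfun
  have hQ : ∀ h x : H, Qfun J A W₁₁ W₁₂ W₂₂ ρ h x
      = b J (S x) x - 2 * b J (T h) x + ρ * b J (W₂₂ h) h := by
    intro h x
    have e0 : Qfun J A W₁₁ W₁₂ W₂₂ ρ h x
        = b J (W₁₁ x + W₁₂ (A x - h)) x
          + ρ * b J ((ρ:ℂ)⁻¹ • kadj J W₁₂ x + W₂₂ (A x - h)) (A x - h) := rfl
    have einv : ((ρ:ℂ))⁻¹ = ((ρ⁻¹ : ℝ) : ℂ) := by push_cast; ring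
    rw [e0, einv, hSdef, hTdef]
    simp only [ContinuousLinearMap.add_apply, ContinuousLinearMap.comp_apply,
      ContinuousLinearMap.smul_apply, map_sub, b_add_left, b_sub_left, b_add_right,
      b_sub_right, b_smul_left, b_smul_right, b_kadj_left J hJ2]
    have s1 : b J x (W₁₂ h) = b J (W₁₂ h) x := b_symm J hJsa _ _
    have s2 : b J (W₂₂ (A x)) h = b J (W₂₂ h) (A x) := by
      rw [bW22, b_symm J hJsa]
    have s3 : b J (W₂₂ (A x)) (A x) = b J (A x) (W₂₂ (A x)) := b_symm J hJsa _ _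
    have s4 : b J (W₂₂ h) h = b J h (W₂₂ h) := b_symm J hJsa _ _
    rw [s1, s2]
    field_simp
    ring
  -- complex symmetry of S
  have hScS : ∀ u v : H, c J (S u) v = c J u (S v) := by
    intro u v
    rw [hSdef]
    simp only [ContinuousLinearMap.add_apply, ContinuousLinearMap.comp_apply,
      ContinuousLinearMap.smul_apply, c_add_left, c_add_right, c_smul_left, c_smul_right,
      Complex.conj_ofReal, c_kadj_left J hJ2, c_kadj_right J hJsa hJ2, cW11, cW22]
    ring
  have hbS : ∀ u v : H, b J (S u) v = b J (S v) u := by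
    intro u v
    have h1 : b J (S u) v = b J u (S v) := by rw [b, hScS]; rfl
    rw [h1, b_symm J hJsa]
  -- Krein selfadjointness of S
  have hSk : kadj J S = S := by
    ext u
    refine ext_inner_left ℂ fun v => ?_
    have hJad : ContinuousLinearMap.adjoint J = J := by
      rw [← ContinuousLinearMap.star_eq_adjoint]; exact hJsa
    have hmove : ∀ x y : H, (inner ℂ x (J y) : ℂ) = inner ℂ (J x) y := fun x y => by
      conv_rhs => rw [← hJad]
      exact (ContinuousLinearMap.adjoint_inner_left J y x).symm
    calc (inner ℂ v (kadj J S u) : ℂ)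
        = inner ℂ v (J (ContinuousLinearMap.adjoint S (J u))) := rfl
      _ = inner ℂ (J v) (ContinuousLinearMap.adjoint S (J u)) := hmove _ _
      _ = inner ℂ (S (J v)) (J u) := ContinuousLinearMap.adjoint_inner_right _ _ _
      _ = inner ℂ (J (S (J v))) u := hmove _ _
      _ = inner ℂ (J (J v)) (S u) := hScS (J v) u
      _ = inner ℂ v (S u) := by rw [hJJ]
  -- positivity from existence of an optimal inverse
  have hpos_of : ∀ G₀ : H →L[ℂ] H,
      (∀ h x : H, Qfun J A W₁₁ W₁₂ W₂₂ ρ h (G₀ h) ≤ Qfun J A W₁₁ W₁₂ W₂₂ ρ h x)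
      → ∀ x : H, 0 ≤ b J (S x) x := by
    intro G₀ hG x
    have h0 : ∀ y : H, b J (S (G₀ 0)) (G₀ 0) ≤ b J (S y) y := by
      intro y
      have h1 := hG 0 y
      rw [hQ 0 (G₀ 0), hQ 0 y] at h1
      have hT0 : T (0 : H) = 0 := map_zero T
      have hW0 : W₂₂ (0 : H) = 0 := map_zero W₂₂
      rw [hT0, hW0] at h1
      simpa [b_zero_left, b_zero_right] using h1
    by_contra hneg
    push_neg at hneg
    set a := b J (S x) x with ha
    set c₀ := b J (S (G₀ 0)) (G₀ 0) with hc₀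
    have hc0 : c₀ ≤ 0 := by
      have := h0 0
      simpa [map_zero, b_zero_left] using this
    have hsq : ∀ t : ℝ, c₀ ≤ t ^ 2 * a := by
      intro t
      have h1 := h0 ((t:ℂ) • x)
      rw [map_smul] at h1
      rw [b_smul_left, b_smul_right] at h1
      calc c₀ ≤ t * (t * a) := h1
        _ = t ^ 2 * a := by ring
    have hfr : 0 ≤ c₀ / a + 1 := by
      have : 0 ≤ c₀ / a := div_nonneg_of_nonpos hc0 (le_of_lt hneg)
      linarith
    have h2 := hsq (Real.sqrt (c₀ / a + 1))
    rw [Real.sq_sqrt hfr] at h2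
    have h3 : (c₀ / a + 1) * a = c₀ + a := by
      have hane : a ≠ 0 := ne_of_lt hneg
      field_simp
    rw [h3] at h2
    linarith
  -- optimality from S G = T and positivity
  have hopt_of : ∀ G : H →L[ℂ] H, (∀ x : H, 0 ≤ b J (S x) x) → S ∘L G = T →
      ∀ h x : H, Qfun J A W₁₁ W₁₂ W₂₂ ρ h (G h) ≤ Qfun J A W₁₁ W₁₂ W₂₂ ρ h x := by
    intro G hpos hGeq h x
    rw [hQ h x, hQ h (G h)]
    have hTh : T h = S (G h) := by
      rw [← hGeq]; rfl
    have key : b J (S x) x - 2 * b J (T h) x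
        - (b J (S (G h)) (G h) - 2 * b J (T h) (G h))
        = b J (S (x - G h)) (x - G h) := by
      rw [hTh]
      simp only [map_sub, b_sub_left, b_sub_right]
      have := hbS x (G h)
      linarith
    have := hpos (x - G h)
    linarith
  -- S G = T from optimality (given positivity)
  have hsolve : ∀ G : H →L[ℂ] H, (∀ x : H, 0 ≤ b J (S x) x) →
      (∀ h x : H, Qfun J A W₁₁ W₁₂ W₂₂ ρ h (G h) ≤ Qfun J A W₁₁ W₁₂ W₂₂ ρ h x) →
      S ∘L G = T := by
    intro G hpos hG
    ext h
    rw [ContinuousLinearMap.comp_apply]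
    have hblin : ∀ v : H, b J (S (G h) - T h) v = 0 := by
      intro v
      set a := b J (S (G h) - T h) v with ha
      set q := b J (S v) v with hq
      have hqpos : 0 ≤ q := hpos v
      have key : ∀ t : ℝ, 0 ≤ 2 * t * a + t ^ 2 * q := by
        intro t
        have h1 := hG h (G h + (t:ℂ) • v)
        rw [hQ h (G h + (t:ℂ) • v), hQ h (G h)] at h1
        simp only [map_add, map_smul, b_add_left, b_add_right, b_smul_left,
          b_smul_right] at h1
        rw [hbS v (G h)] at h1
        have hav : a = b J (S (G h)) v - b J (T h) v := by rw [ha, b_sub_left]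
        rw [hav]
        linarith
      -- eliminate the linear term
      have hk := key (-a / (q + 1))
      have hq1 : (0:ℝ) < q + 1 := by linarith
      have hform : 2 * (-a / (q + 1)) * a + (-a / (q + 1)) ^ 2 * q
          = -(a ^ 2 * (q + 2)) / (q + 1) ^ 2 := by
        field_simp
        ring
      rw [hform] at hk
      have ha2 : a ^ 2 * (q + 2) ≤ 0 := by
        have h2 : (0:ℝ) < (q + 1) ^ 2 := by positivity
        rw [le_div_iff₀ h2] at hk
        linarith
      have : a ^ 2 ≤ 0 := by nlinarith
      have h4 : a ^ 2 = 0 := le_antisymm this (sq_nonneg a)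
      exact pow_eq_zero_iff two_ne_zero |>.mp h4
    -- upgrade to the complex form and conclude
    have hclin : ∀ v : H, c J (S (G h) - T h) v = 0 := by
      intro v
      have h1 := hblin v
      have h2 := hblin (Complex.I • v)
      rw [b, c_smul_right] at h2
      rw [b] at h1
      apply Complex.ext
      · simpa using h1
      · have := h2
        simp [Complex.mul_re] at this
        simpa using this
    have hw : S (G h) - T h = 0 := by
      have h0 : (inner ℂ (J (S (G h) - T h)) (J (S (G h) - T h)) : ℂ) = 0 :=
        hclin (J (S (G h) - T h))
      have hJ0 : J (S (G h) - T h) = 0 := inner_self_eq_zero.mp h0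
      calc S (G h) - T h = J (J (S (G h) - T h)) := (hJJ _).symm
        _ = 0 := by rw [hJ0, map_zero]
    exact sub_eq_zero.mp hw
  -- assemble the statement
  constructor
  · constructor
    · rintro ⟨G, hG⟩
      have hpos := hpos_of G hG
      exact ⟨⟨hSk, hpos⟩, G, hsolve G hpos hG⟩
    · rintro ⟨⟨_, hpos⟩, X, hX⟩
      exact ⟨X, hopt_of X hpos hX⟩
  · rintro ⟨G₀, hG₀⟩ G
    have hpos := hpos_of G₀ hG₀
    exact ⟨fun hG => hsolve G hpos hG, fun hGeq => hopt_of G hpos hGeq⟩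
end
end

section
/- Let T, V ∈ L(H) be trace class, let ρ ∈ ℝ with ρ ≠ 0, and suppose T^#T + ρV^#V is Krein-positive. Then the following are equivalent: (i) for every trace-class B₀ ∈ L(H) there exists X₀ ∈ L(H) such that tr_J((TX₀)^#(TX₀)) + ρ tr_J((VX₀−B₀)^#(VX₀−B₀)) ≤ tr_J((TX)^#(TX)) + ρ tr_J((VX−B₀)^#(VX−B₀)) for every X ∈ L(H); (ii) ran V^# ⊆ ran(T^#T + ρV^#V). -/
open ContinuousLinearMap

noncomputable section

variable {H : Type*} [NormedAddCommGroup H] [InnerProductSpace ℂ H] [CompleteSpace H]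

/-! ### Auxiliary lemmas -/

section Aux

local notation "⟪" x ", " y "⟫" => @inner ℂ _ _ x y

variable {ι : Type*} (b : HilbertBasis ι ℂ H)

lemma st18_parseval (x : H) : HasSum (fun i => ‖(⟪b i, x⟫ : ℂ)‖ ^ 2) (‖x‖ ^ 2) := by
  have h := (b.hasSum_inner_mul_inner x x).mapL Complex.reCLM
  have h1 : (fun i => Complex.reCLM (⟪x, b i⟫ * ⟪b i, x⟫)) = fun i => ‖(⟪b i, x⟫ : ℂ)‖ ^ 2 := by
    funext i
    have : (⟪x, b i⟫ : ℂ) = starRingEnd ℂ ⟪b i, x⟫ := (inner_conj_symm _ _).symm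
    rw [this, RCLike.conj_mul]
    norm_cast
  have h2 : Complex.reCLM (⟪x, x⟫ : ℂ) = ‖x‖ ^ 2 := by
    simpa using inner_self_eq_norm_sq (𝕜 := ℂ) x
  rwa [h1, h2] at h

lemma st18_hs_comp_left {S : H →L[ℂ] H} (hS : IsHilbertSchmidt b S) (X : H →L[ℂ] H) :
    IsHilbertSchmidt b (X ∘L S) := by
  refine Summable.of_nonneg_of_le (fun i => by positivity) (fun i => ?_) (hS.mul_left (‖X‖^2))
  calc ‖(X ∘L S) (b i)‖ ^ 2 ≤ (‖X‖ * ‖S (b i)‖) ^ 2 := by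
        gcongr; exact X.le_opNorm _
    _ = ‖X‖ ^ 2 * ‖S (b i)‖ ^ 2 := by ring

lemma st18_hs_adjoint {S : H →L[ℂ] H} (hS : IsHilbertSchmidt b S) :
    IsHilbertSchmidt b (adjoint S) := by
  have key : Summable fun p : ι × ι => ‖(⟪S (b p.1), b p.2⟫ : ℂ)‖ ^ 2 := by
    rw [summable_prod_of_nonneg (fun p => by positivity)]
    constructor
    · intro i
      exact ((st18_parseval b (S (b i))).summable.congr (fun j => by
        rw [norm_inner_symm]))
    · refine hS.congr fun i => ?_
      have := (st18_parseval b (S (b i))).tsum_eq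
      rw [← this]
      exact tsum_congr fun j => by rw [norm_inner_symm]
  have key2 : Summable fun p : ι × ι => ‖(⟪S (b p.2), b p.1⟫ : ℂ)‖ ^ 2 :=
    (key.prod_symm : _)
  rw [summable_prod_of_nonneg (fun p => by positivity)] at key2
  refine key2.2.congr fun j => ?_
  have : ∀ i, ‖(⟪S (b i), b j⟫ : ℂ)‖ ^ 2 = ‖(⟪b i, adjoint S (b j)⟫ : ℂ)‖ ^ 2 := by
    intro i
    rw [← adjoint_inner_right, norm_inner_symm]
  rw [tsum_congr this, (st18_parseval b (adjoint S (b j))).tsum_eq]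

lemma st18_hs_comp_right {S : H →L[ℂ] H} (hS : IsHilbertSchmidt b S) (X : H →L[ℂ] H) :
    IsHilbertSchmidt b (S ∘L X) := by
  have h1 : IsHilbertSchmidt b (adjoint X ∘L adjoint S) :=
    st18_hs_comp_left b (st18_hs_adjoint b hS) _
  have h2 : IsHilbertSchmidt b (adjoint (adjoint X ∘L adjoint S)) := st18_hs_adjoint b h1
  rwa [adjoint_comp, adjoint_adjoint, adjoint_adjoint] at h2

lemma st18_hs_of_tc {S : H →L[ℂ] H} (hS : IsTraceClass b S) : IsHilbertSchmidt b S := by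
  obtain ⟨S₁, S₂, _, h2, rfl⟩ := hS
  exact st18_hs_comp_left b h2 S₁

lemma st18_hs_sub {S S' : H →L[ℂ] H} (hS : IsHilbertSchmidt b S) (hS' : IsHilbertSchmidt b S') :
    IsHilbertSchmidt b (S - S') := by
  refine Summable.of_nonneg_of_le (fun i => by positivity) (fun i => ?_)
    ((hS.mul_left 2).add (hS'.mul_left 2))
  calc ‖(S - S') (b i)‖ ^ 2 = ‖S (b i) - S' (b i)‖ ^ 2 := rfl
    _ ≤ (‖S (b i)‖ + ‖S' (b i)‖) ^ 2 := by gcongr; exact norm_sub_le _ _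
    _ ≤ 2 * ‖S (b i)‖ ^ 2 + 2 * ‖S' (b i)‖ ^ 2 := by nlinarith [sq_nonneg (‖S (b i)‖ - ‖S' (b i)‖)]

lemma st18_summable_mul_norm {C D : H →L[ℂ] H} (hC : IsHilbertSchmidt b C)
    (hD : IsHilbertSchmidt b D) : Summable fun i => ‖C (b i)‖ * ‖D (b i)‖ := by
  refine Summable.of_nonneg_of_le (fun i => by positivity) (fun i => ?_)
    ((hC.add hD).mul_left (1/2))
  nlinarith [sq_nonneg (‖C (b i)‖ - ‖D (b i)‖), sq_nonneg (‖C (b i)‖), sq_nonneg (‖D (b i)‖)]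

lemma st18_summable_inner {C D : H →L[ℂ] H} (hC : IsHilbertSchmidt b C)
    (hD : IsHilbertSchmidt b D) : Summable fun i => (⟪C (b i), D (b i)⟫ : ℂ) :=
  Summable.of_norm_bounded (st18_summable_mul_norm b hC hD) (fun i => norm_inner_le_norm _ _)

lemma st18_summable_re {C D : H →L[ℂ] H} (hC : IsHilbertSchmidt b C)
    (hD : IsHilbertSchmidt b D) : Summable fun i => (⟪C (b i), D (b i)⟫ : ℂ).re :=
  ((st18_summable_inner b hC hD).hasSum.mapL Complex.reCLM).summable

/-- Douglas-type lemma: pointwise range inclusion yields a bounded solution. -/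
lemma st18_douglas (W C : H →L[ℂ] H) (h : ∀ u : H, ∃ y : H, W y = C u) :
    ∃ X : H →L[ℂ] H, W ∘L X = C := by
  classical
  set K : Submodule ℂ H := LinearMap.ker (W : H →ₗ[ℂ] H) with hK
  haveI : CompleteSpace K := (ContinuousLinearMap.isClosed_ker W).completeSpace_coe
  have uniq : ∀ z z' : H, z ∈ Kᗮ → z' ∈ Kᗮ → W z = W z' → z = z' := by
    intro z z' hz hz' hw
    have hmem : z - z' ∈ K := by
      simp only [hK, LinearMap.mem_ker, map_sub, ContinuousLinearMap.coe_coe, hw, sub_self]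
    have horth : z - z' ∈ Kᗮ := Submodule.sub_mem _ hz hz'
    have : (⟪z - z', z - z'⟫ : ℂ) = 0 := (Submodule.mem_orthogonal _ _).1 horth _ hmem
    exact sub_eq_zero.1 (inner_self_eq_zero.1 this)
  have hex : ∀ u : H, ∃ z : H, z ∈ Kᗮ ∧ W z = C u := by
    intro u
    obtain ⟨y, hy⟩ := h u
    refine ⟨y - (K.orthogonalProjectionOnto y : H), Submodule.sub_starProjection_mem_orthogonal (K := K) y, ?_⟩
    have hker : ((K.orthogonalProjectionOnto y : H)) ∈ K := (K.orthogonalProjectionOnto y).2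
    have : W ((K.orthogonalProjectionOnto y : H)) = 0 := hker
    rw [map_sub, this, sub_zero, hy]
  choose f hfm hfW using hex
  have hadd : ∀ u v, f (u + v) = f u + f v := by
    intro u v
    refine uniq _ _ (hfm _) (Submodule.add_mem _ (hfm u) (hfm v)) ?_
    simp only [map_add, hfW]
  have hsmul : ∀ (c : ℂ) (u), f (c • u) = c • f u := by
    intro c u
    refine uniq _ _ (hfm _) (Submodule.smul_mem _ c (hfm u)) ?_
    simp only [map_smul, hfW]
  set g : H →ₗ[ℂ] H := { toFun := f, map_add' := hadd, map_smul' := hsmul } with hg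
  have hgraph : IsClosed (g.graph : Set (H × H)) := by
    have : (g.graph : Set (H × H)) = {p : H × H | p.2 ∈ Kᗮ ∧ W p.2 = C p.1} := by
      ext p
      constructor
      · rintro hp
        have he : p.2 = g p.1 := (LinearMap.mem_graph_iff g _).1 hp
        rw [Set.mem_setOf_eq, he]
        exact ⟨hfm p.1, hfW p.1⟩
      · rintro ⟨h1, h2⟩
        exact (LinearMap.mem_graph_iff g _).2 (uniq _ _ (hfm p.1) h1 (by rw [hfW, h2])).symm
    rw [this]
    apply IsClosed.inter
    · exact (Submodule.isClosed_orthogonal K).preimage continuous_snd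
    · exact isClosed_eq ((W.continuous).comp continuous_snd) ((C.continuous).comp continuous_fst)
  refine ⟨ContinuousLinearMap.ofIsClosedGraph hgraph, ?_⟩
  ext u
  have : (ContinuousLinearMap.ofIsClosedGraph hgraph) u = f u := rfl
  simp only [ContinuousLinearMap.comp_apply, this, hfW]

section quad

variable {J : H →L[ℂ] H} (hJsa : IsSelfAdjoint J)
include hJsa

lemma st18_Jswap (u v : H) : (⟪J u, v⟫ : ℂ) = ⟪u, J v⟫ := by
  conv_lhs => rw [← hJsa.adjoint_eq]
  rw [adjoint_inner_left]

lemma st18_quad (u v : H) : (⟪J (u + v), u + v⟫ : ℂ).re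
    = (⟪J u, u⟫ : ℂ).re + (⟪J v, v⟫ : ℂ).re + 2 * (⟪J u, v⟫ : ℂ).re := by
  have h2 : (⟪J v, u⟫ : ℂ) = starRingEnd ℂ ⟪J u, v⟫ := by
    rw [st18_Jswap hJsa]; exact (inner_conj_symm _ _).symm
  rw [map_add, inner_add_left, inner_add_right, inner_add_right, h2]
  simp only [Complex.add_re, Complex.conj_re]
  ring

end quad

/-- The operator `W = T*JT + ρ V*JV = J ∘ (T^#T + ρ V^#V)`. -/
def st18_W (J T V : H →L[ℂ] H) (ρ : ℝ) : H →L[ℂ] H :=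
  adjoint T ∘L (J ∘L T) + (ρ : ℂ) • (adjoint V ∘L (J ∘L V))

/-- The "normal equation residual" operator `R = W X - ρ V* J B₀`. -/
def st18_R (J T V B₀ : H →L[ℂ] H) (ρ : ℝ) (X : H →L[ℂ] H) : H →L[ℂ] H :=
  st18_W J T V ρ ∘L X - (ρ : ℂ) • (adjoint V ∘L (J ∘L B₀))

lemma st18_re_inner_W (J T V : H →L[ℂ] H) (ρ : ℝ) (x y : H) :
    (⟪st18_W J T V ρ x, y⟫ : ℂ).re
      = (⟪J (T x), T y⟫ : ℂ).re + ρ * (⟪J (V x), V y⟫ : ℂ).re := by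
  have happ : st18_W J T V ρ x = adjoint T (J (T x)) + (ρ : ℂ) • adjoint V (J (V x)) := by
    simp [st18_W]
  rw [happ, inner_add_left, inner_smul_left, adjoint_inner_left, adjoint_inner_left,
    Complex.conj_ofReal, Complex.add_re, Complex.re_ofReal_mul]

lemma st18_re_inner_R (J T V B₀ : H →L[ℂ] H) (ρ : ℝ) (X : H →L[ℂ] H) (u z : H) :
    (⟪st18_R J T V B₀ ρ X u, z⟫ : ℂ).re
      = (⟪J (T (X u)), T z⟫ : ℂ).re + ρ * (⟪J (V (X u) - B₀ u), V z⟫ : ℂ).re := by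
  have happ : st18_R J T V B₀ ρ X u
      = st18_W J T V ρ (X u) - (ρ : ℂ) • adjoint V (J (B₀ u)) := by
    simp [st18_R]
  rw [happ, inner_sub_left, inner_smul_left, adjoint_inner_left, Complex.conj_ofReal,
    Complex.sub_re, Complex.re_ofReal_mul, st18_re_inner_W, map_sub, inner_sub_left,
    Complex.sub_re]
  ring

/-- The objective functional. -/
def st18_G {ι : Type*} (J : H →L[ℂ] H) (b : HilbertBasis ι ℂ H) (T V B₀ : H →L[ℂ] H)
    (ρ : ℝ) (X : H →L[ℂ] H) : ℝ :=
  trJ J b (kadj J (T ∘L X) ∘L (T ∘L X)) +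
    ρ * trJ J b (kadj J (V ∘L X - B₀) ∘L (V ∘L X - B₀))

lemma st18_trJ_eq {J : H →L[ℂ] H} (hJ2 : J ∘L J = 1) (P Q : H →L[ℂ] H) :
    trJ J b (kadj J P ∘L Q) = ∑' i, (⟪J (Q (b i)), P (b i)⟫ : ℂ).re := by
  have hJJ : ∀ x : H, J (J x) = x := by
    intro x
    have := congrArg (fun S : H →L[ℂ] H => S x) hJ2
    simpa using this
  unfold trJ
  refine tsum_congr fun i => ?_
  have : (kadj J P ∘L Q) (b i) = J ((adjoint P) (J (Q (b i)))) := by simp [kadj]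
  rw [this, hJJ, adjoint_inner_left]

lemma st18_expansion {J : H →L[ℂ] H} (hJsa : IsSelfAdjoint J) (hJ2 : J ∘L J = 1)
    {T V B₀ : H →L[ℂ] H} (ρ : ℝ)
    (hT : IsHilbertSchmidt b T) (hV : IsHilbertSchmidt b V) (hB : IsHilbertSchmidt b B₀)
    (X Z : H →L[ℂ] H) :
    st18_G J b T V B₀ ρ (X + Z) = st18_G J b T V B₀ ρ X
      + (∑' i, ((⟪J (T (Z (b i))), T (Z (b i))⟫ : ℂ).re
           + ρ * (⟪J (V (Z (b i))), V (Z (b i))⟫ : ℂ).re))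
      + 2 * ∑' i, (⟪st18_R J T V B₀ ρ X (b i), Z (b i)⟫ : ℂ).re := by
  have hTX := st18_hs_comp_right b hT X
  have hTZ := st18_hs_comp_right b hT Z
  have hVX := st18_hs_comp_right b hV X
  have hVZ := st18_hs_comp_right b hV Z
  have hVXB : IsHilbertSchmidt b (V ∘L X - B₀) := st18_hs_sub b hVX hB
  have S1 : Summable fun i => (⟪J (T (X (b i))), T (X (b i))⟫ : ℂ).re :=
    (st18_summable_re b (st18_hs_comp_left b hTX J) hTX).congr (fun i => by simp)
  have S2 : Summable fun i => (⟪J (T (Z (b i))), T (Z (b i))⟫ : ℂ).re :=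
    (st18_summable_re b (st18_hs_comp_left b hTZ J) hTZ).congr (fun i => by simp)
  have S3 : Summable fun i => (⟪J (T (X (b i))), T (Z (b i))⟫ : ℂ).re :=
    (st18_summable_re b (st18_hs_comp_left b hTX J) hTZ).congr (fun i => by simp)
  have S4 : Summable fun i =>
      (⟪J (V (X (b i)) - B₀ (b i)), V (X (b i)) - B₀ (b i)⟫ : ℂ).re :=
    (st18_summable_re b (st18_hs_comp_left b hVXB J) hVXB).congr (fun i => by simp)
  have S5 : Summable fun i => (⟪J (V (Z (b i))), V (Z (b i))⟫ : ℂ).re :=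
    (st18_summable_re b (st18_hs_comp_left b hVZ J) hVZ).congr (fun i => by simp)
  have S6 : Summable fun i => (⟪J (V (X (b i)) - B₀ (b i)), V (Z (b i))⟫ : ℂ).re :=
    (st18_summable_re b (st18_hs_comp_left b hVXB J) hVZ).congr (fun i => by simp)
  have e1 : ∀ i, (⟪J (T (X (b i))) + J (T (Z (b i))), T (X (b i)) + T (Z (b i))⟫ : ℂ).re
      = (⟪J (T (X (b i))), T (X (b i))⟫ : ℂ).re + (⟪J (T (Z (b i))), T (Z (b i))⟫ : ℂ).re
        + 2 * (⟪J (T (X (b i))), T (Z (b i))⟫ : ℂ).re := by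
    intro i
    rw [← map_add]
    exact st18_quad hJsa _ _
  have e2 : ∀ i, (⟪J (V (X (b i)) + V (Z (b i)) - B₀ (b i)),
        V (X (b i)) + V (Z (b i)) - B₀ (b i)⟫ : ℂ).re
      = (⟪J (V (X (b i)) - B₀ (b i)), V (X (b i)) - B₀ (b i)⟫ : ℂ).re
        + (⟪J (V (Z (b i))), V (Z (b i))⟫ : ℂ).re
        + 2 * (⟪J (V (X (b i)) - B₀ (b i)), V (Z (b i))⟫ : ℂ).re := by
    intro i
    have h : V (X (b i)) + V (Z (b i)) - B₀ (b i)
        = (V (X (b i)) - B₀ (b i)) + V (Z (b i)) := by abel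
    rw [h, st18_quad hJsa]
  have e3 : ∀ i, (⟪st18_R J T V B₀ ρ X (b i), Z (b i)⟫ : ℂ).re
      = (⟪J (T (X (b i))), T (Z (b i))⟫ : ℂ).re
        + ρ * (⟪J (V (X (b i)) - B₀ (b i)), V (Z (b i))⟫ : ℂ).re :=
    fun i => st18_re_inner_R J T V B₀ ρ X (b i) (Z (b i))
  simp only [st18_G, st18_trJ_eq b hJ2, ContinuousLinearMap.comp_apply,
    ContinuousLinearMap.add_apply, ContinuousLinearMap.sub_apply, map_add]
  rw [tsum_congr e1, tsum_congr e2, tsum_congr e3,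
    Summable.tsum_add (S1.add S2) (S3.mul_left 2), Summable.tsum_add S1 S2,
    Summable.tsum_add (S4.add S5) (S6.mul_left 2), Summable.tsum_add S4 S5,
    Summable.tsum_add S2 (S5.mul_left ρ),
    Summable.tsum_add S3 (S6.mul_left ρ)]
  simp only [tsum_mul_left]
  ring

lemma st18_scale2 (J : H →L[ℂ] H) (t : ℝ) (v w : H) :
    (⟪J ((t:ℂ) • v), (t:ℂ) • w⟫ : ℂ).re = t^2 * (⟪J v, w⟫ : ℂ).re := by
  rw [map_smul, inner_smul_left, inner_smul_right, Complex.conj_ofReal, ← mul_assoc,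
    ← Complex.ofReal_mul, Complex.re_ofReal_mul]
  ring

lemma st18_scale1 (t : ℝ) (u w : H) :
    (⟪u, (t:ℂ) • w⟫ : ℂ).re = t * (⟪u, w⟫ : ℂ).re := by
  rw [inner_smul_right, Complex.re_ofReal_mul]

end Aux

section MainThm

local notation "⟪" x ", " y "⟫" => @inner ℂ _ _ x y

/-- for trace-class `T, V` with `T^#T + ρV^#V` Krein-positive, the
indefinite operator smoothing problem has a solution for every trace-class `B₀` iff
`ran V^# ⊆ ran(T^#T + ρV^#V)`. -/
theorem stmt18 {ι : Type*}
    [TopologicalSpace.SeparableSpace H]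
    (J : H →L[ℂ] H) (hJsa : IsSelfAdjoint J) (hJ2 : J ∘L J = 1)
    (b : HilbertBasis ι ℂ H)
    (T V : H →L[ℂ] H) (ρ : ℝ) (hρ : ρ ≠ 0)
    (hTtc : IsTraceClass b T) (hVtc : IsTraceClass b V)
    (hpos : KreinPositive J (kadj J T ∘L T + (ρ : ℂ) • (kadj J V ∘L V))) :
    (∀ B₀ : H →L[ℂ] H, IsTraceClass b B₀ →
        ∃ X₀ : H →L[ℂ] H, ∀ X : H →L[ℂ] H,
          trJ J b (kadj J (T ∘L X₀) ∘L (T ∘L X₀)) +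
              ρ * trJ J b (kadj J (V ∘L X₀ - B₀) ∘L (V ∘L X₀ - B₀)) ≤
            trJ J b (kadj J (T ∘L X) ∘L (T ∘L X)) +
              ρ * trJ J b (kadj J (V ∘L X - B₀) ∘L (V ∘L X - B₀))) ↔
      (∀ x : H, ∃ y : H,
        (kadj J T ∘L T + (ρ : ℂ) • (kadj J V ∘L V)) y = kadj J V x) := by
  classical
  set A : H →L[ℂ] H := kadj J T ∘L T + (ρ : ℂ) • (kadj J V ∘L V) with hA
  have hJJ : ∀ x : H, J (J x) = x := by
    intro x
    have := congrArg (fun S : H →L[ℂ] H => S x) hJ2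
    simpa using this
  have hThs := st18_hs_of_tc b hTtc
  have hVhs := st18_hs_of_tc b hVtc
  have hWA : ∀ x : H, st18_W J T V ρ x = J (A x) := by
    intro x
    simp [st18_W, hA, kadj, hJJ]
  have hAW : ∀ x : H, A x = J (st18_W J T V ρ x) := by
    intro x; rw [hWA, hJJ]
  have hWpos : ∀ x : H, 0 ≤ (⟪st18_W J T V ρ x, x⟫ : ℂ).re := by
    intro x
    rw [hWA]
    exact hpos.2 x
  have hqterm : ∀ z : H, 0 ≤ (⟪J (T z), T z⟫ : ℂ).re + ρ * (⟪J (V z), V z⟫ : ℂ).re := by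
    intro z
    have := hWpos z
    rwa [st18_re_inner_W] at this
  constructor
  · -- (i) → (ii)
    intro hmin x
    rcases isEmpty_or_nonempty ι with hι | hι
    · -- `H` is trivial
      have hx0 : ∀ z : H, z = 0 := by
        intro z
        have h := (st18_parseval b z).tsum_eq
        rw [tsum_empty] at h
        have : ‖z‖ = 0 := by nlinarith [norm_nonneg z]
        exact norm_eq_zero.1 this
      exact ⟨0, by rw [hx0 (A 0)]; exact (hx0 _).symm⟩
    · set i₀ : ι := Classical.arbitrary ι with hi₀
      have he : (⟪(b i₀ : H), b i₀⟫ : ℂ) = 1 := by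
        rw [inner_self_eq_norm_sq_to_K, b.orthonormal.1 i₀]
        norm_num
      set B₀ : H →L[ℂ] H := ContinuousLinearMap.toSpanSingleton ℂ x ∘L innerSL ℂ (b i₀)
        with hB₀def
      have hB₀apply : ∀ u, B₀ u = (⟪(b i₀ : H), u⟫ : ℂ) • x := by
        intro u
        simp [hB₀def, ContinuousLinearMap.toSpanSingleton_apply]
      have hrk : ∀ w : H,
          IsHilbertSchmidt b (ContinuousLinearMap.toSpanSingleton ℂ w ∘L innerSL ℂ (b i₀)) := by
        intro w
        refine (((st18_parseval b (b i₀)).summable).mul_right (‖w‖^2)).congr fun i => ?_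
        simp only [ContinuousLinearMap.comp_apply, innerSL_apply_apply,
          ContinuousLinearMap.toSpanSingleton_apply, norm_smul, mul_pow]
        rw [norm_inner_symm]
      have hB₀tc : IsTraceClass b B₀ :=
        ⟨ContinuousLinearMap.toSpanSingleton ℂ x ∘L innerSL ℂ (b i₀),
         ContinuousLinearMap.toSpanSingleton ℂ (b i₀) ∘L innerSL ℂ (b i₀),
         hrk x, hrk (b i₀), by
          ext u
          simp [hB₀def, ContinuousLinearMap.toSpanSingleton_apply, inner_smul_right, he, b.orthonormal.1 i₀]⟩
      have hBhs := st18_hs_of_tc b hB₀tc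
      obtain ⟨X₀, hX₀⟩ := hmin B₀ hB₀tc
      have hmin' : ∀ Xx, st18_G J b T V B₀ ρ X₀ ≤ st18_G J b T V B₀ ρ Xx := fun Xx => hX₀ Xx
      have hcross0 : ∀ Y : H →L[ℂ] H,
          (∑' i, (⟪st18_R J T V B₀ ρ X₀ (b i), Y (b i)⟫ : ℂ).re) = 0 := by
        intro Y
        set q : ℝ := ∑' i, ((⟪J (T (Y (b i))), T (Y (b i))⟫ : ℂ).re
          + ρ * (⟪J (V (Y (b i))), V (Y (b i))⟫ : ℂ).re) with hqdef
        set c : ℝ := ∑' i, (⟪st18_R J T V B₀ ρ X₀ (b i), Y (b i)⟫ : ℂ).re with hcdef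
        have hq0 : 0 ≤ q := by
          rw [hqdef]
          exact tsum_nonneg (fun i => hqterm _)
        have key : ∀ t : ℝ, 0 ≤ t^2 * q + 2 * (t * c) := by
          intro t
          have hexp := st18_expansion b hJsa hJ2 ρ hThs hVhs hBhs X₀ ((t:ℂ) • Y)
          have h1 := hmin' (X₀ + (t:ℂ) • Y)
          rw [hexp] at h1
          have hmid : (∑' i, ((⟪J (T (((t:ℂ) • Y) (b i))), T (((t:ℂ) • Y) (b i))⟫ : ℂ).re
              + ρ * (⟪J (V (((t:ℂ) • Y) (b i))), V (((t:ℂ) • Y) (b i))⟫ : ℂ).re))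
              = t^2 * q := by
            rw [hqdef, ← tsum_mul_left]
            refine tsum_congr fun i => ?_
            have h1' : T (((t:ℂ) • Y) (b i)) = (t:ℂ) • T (Y (b i)) := by simp
            have h2' : V (((t:ℂ) • Y) (b i)) = (t:ℂ) • V (Y (b i)) := by simp
            rw [h1', h2', st18_scale2, st18_scale2]
            ring
          have hcr : (∑' i, (⟪st18_R J T V B₀ ρ X₀ (b i), ((t:ℂ) • Y) (b i)⟫ : ℂ).re)
              = t * c := by
            rw [hcdef, ← tsum_mul_left]
            refine tsum_congr fun i => ?_
            have h1' : ((t:ℂ) • Y) (b i) = (t:ℂ) • Y (b i) := by simp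
            rw [h1', st18_scale1]
          rw [hmid, hcr] at h1
          linarith
        by_contra hc
        have hq1 : 0 < q + 1 := by linarith
        have ht := key (-(c / (q + 1)))
        have he2 : (-(c / (q + 1)))^2 * q + 2 * ((-(c / (q + 1))) * c)
            = -(c^2 * (q + 2)) / (q + 1)^2 := by
          field_simp
          ring
        rw [he2] at ht
        have hpos' : 0 < c^2 * (q + 2) := by
          have : c ≠ 0 := hc
          positivity
        have : -(c^2 * (q + 2)) / (q + 1)^2 < 0 := by
          apply div_neg_of_neg_of_pos <;> nlinarith
        linarith
      have hRe : st18_R J T V B₀ ρ X₀ (b i₀) = 0 := by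
        have hw : ∀ w : H, (⟪st18_R J T V B₀ ρ X₀ (b i₀), w⟫ : ℂ).re = 0 := by
          intro w
          set R := st18_R J T V B₀ ρ X₀ with hR
          have hY := hcross0 (ContinuousLinearMap.toSpanSingleton ℂ w ∘L innerSL ℂ (b i₀))
          have hs : HasSum (fun i => (⟪R (b i),
              (ContinuousLinearMap.toSpanSingleton ℂ w ∘L innerSL ℂ (b i₀)) (b i)⟫ : ℂ).re)
              ((⟪(b i₀ : H), (adjoint R) w⟫ : ℂ).re) := by
            have h0 := (b.hasSum_inner_mul_inner (b i₀) ((adjoint R) w)).mapL Complex.reCLM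
            refine h0.congr_fun fun i => ?_
            simp only [Complex.reCLM_apply, ContinuousLinearMap.comp_apply, innerSL_apply_apply,
              ContinuousLinearMap.toSpanSingleton_apply]
            rw [inner_smul_right, adjoint_inner_right]
          have h2 := hs.tsum_eq
          rw [hY] at h2
          have h3 : (⟪(b i₀ : H), (adjoint R) w⟫ : ℂ) = ⟪R (b i₀), w⟫ := adjoint_inner_right _ _ _
          rw [h3] at h2
          exact h2.symm
        have h4 := hw (st18_R J T V B₀ ρ X₀ (b i₀))
        have h5 : ‖st18_R J T V B₀ ρ X₀ (b i₀)‖^2 = 0 := by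
          rw [← inner_self_eq_norm_sq (𝕜 := ℂ)] at *
          exact h4
        have : ‖st18_R J T V B₀ ρ X₀ (b i₀)‖ = 0 := by nlinarith [norm_nonneg (st18_R J T V B₀ ρ X₀ (b i₀))]
        exact norm_eq_zero.1 this
      -- conclude: `A ((ρ⁻¹ : ℂ) • X₀ e) = kadj J V x`
      refine ⟨(ρ:ℂ)⁻¹ • X₀ (b i₀), ?_⟩
      have hρ' : (ρ:ℂ) ≠ 0 := Complex.ofReal_ne_zero.2 hρ
      have h1 : st18_W J T V ρ (X₀ (b i₀)) = (ρ:ℂ) • (adjoint V) (J (B₀ (b i₀))) := by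
        have h0 : st18_R J T V B₀ ρ X₀ (b i₀) = 0 := hRe
        simpa [st18_R, sub_eq_zero] using h0
      have hBe : B₀ (b i₀) = x := by rw [hB₀apply, he, one_smul]
      rw [hAW, map_smul, h1, hBe, smul_smul, inv_mul_cancel₀ hρ', one_smul]
      simp [kadj, hJJ]
  · -- (ii) → (i)
    intro hr B₀ hB₀tc
    have hBhs := st18_hs_of_tc b hB₀tc
    have hex : ∀ u : H, ∃ y : H,
        st18_W J T V ρ y = ((ρ:ℂ) • (adjoint V ∘L (J ∘L B₀))) u := by
      intro u
      obtain ⟨y, hy⟩ := hr (B₀ u)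
      refine ⟨(ρ:ℂ) • y, ?_⟩
      have h2 : st18_W J T V ρ y = adjoint V (J (B₀ u)) := by
        rw [hWA, hy]
        simp [kadj, hJJ]
      rw [map_smul, h2]
      simp
    obtain ⟨X₀, hX₀⟩ := st18_douglas (st18_W J T V ρ) ((ρ:ℂ) • (adjoint V ∘L (J ∘L B₀))) hex
    have hR0 : st18_R J T V B₀ ρ X₀ = 0 := by
      rw [st18_R, hX₀]
      simp
    refine ⟨X₀, fun X => ?_⟩
    have hexp := st18_expansion b hJsa hJ2 ρ hThs hVhs hBhs X₀ (X - X₀)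
    have hXX : X₀ + (X - X₀) = X := by abel
    rw [hXX] at hexp
    show st18_G J b T V B₀ ρ X₀ ≤ st18_G J b T V B₀ ρ X
    rw [hexp]
    have hq : 0 ≤ ∑' i, ((⟪J (T ((X - X₀) (b i))), T ((X - X₀) (b i))⟫ : ℂ).re
        + ρ * (⟪J (V ((X - X₀) (b i))), V ((X - X₀) (b i))⟫ : ℂ).re) :=
      tsum_nonneg (fun i => hqterm _)
    have hc : (∑' i, (⟪st18_R J T V B₀ ρ X₀ (b i), (X - X₀) (b i)⟫ : ℂ).re) = 0 := by
      rw [hR0]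
      simp
    rw [hc]
    linarith

end MainThm
end
end
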